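/- arXiv:0810.0862 — 6 statements merged into one kernel-verified Lean document; each statement's English description precedes it below -/
import Mathlib

section
/- Fix (K,t) and S, and set r = r((K,t),S) when v ∈ S. If v ∉ S, then c(i,(K,t),S) = 0 if and only if i = 0 or i = −1. If v ∈ S, then c(i,(K,t),S) = 0 if and only if (i = 0 and r ≥ 0), or i = −1, or (i = −2 and r ≤ 0). -/
/-!
Common setup: the lattice cohomology complex of a weighted graph
(Némethi; J. Greene, "A surgery triangle for lattice cohomology").

A finite graph `G` with integer weights on vertices and signs on (multi-)edges is
encoded by its symmetric incidence data `M : V → V → ℤ`: for `u ≠ w` the entry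
`M u w` is the signed number of edges joining `u` and `w`, and `M u u = m(u)` is
the weight of `u`.  This is exactly the data of the intersection pairing `(·,·)`
on `L(G) = ℤ⟨E_u : u ∈ V⟩`, via `M u w = (E_u, E_w)`.
-/

noncomputable section

open Function

/-- A graph with integer vertex weights and signed multi-edges, encoded by the
symmetric pairing data `M u w = (E_u, E_w)` on `L(G)`. -/
structure WGraph (V : Type*) where
  M : V → V → ℤ
  symm : ∀ u w, M u w = M w u

variable {V : Type*} [Fintype V] [DecidableEq V]

/-- Evaluation of `K ∈ Hom(L(G), ℤ)` (recorded by its components `K u = K(E_u)`)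
on a lattice vector `x = ∑ x_u E_u ∈ L(G)`. -/
def evalK (K x : V → ℤ) : ℤ := ∑ u, K u * x u

/-- `E_T = ∑_{j ∈ T} E_j ∈ L(G)`. -/
def eVec (T : Finset V) : V → ℤ := fun u => if u ∈ T then 1 else 0

/-- Splitting a sum over `V` at a vertex `v`. -/
theorem sum_split (v : V) (f : V → ℤ) :
    ∑ u, f u = f v + ∑ u : {u : V // u ≠ v}, f u.1 := by
  rw [Fintype.sum_eq_add_sum_compl v f]
  congr 1
  exact Finset.sum_subtype _ (fun x => by simp) f

namespace WGraph

/-- The symmetric bilinear pairing `(x, y)` on `L(G)`. -/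
def pair (G : WGraph V) (x y : V → ℤ) : ℤ := ∑ u, ∑ w, G.M u w * x u * y w

/-- `K ∈ Hom(L(G),ℤ)` is characteristic: `(K,x) ≡ (x,x) (mod 2)` for all `x ∈ L(G)`. -/
def IsChar (G : WGraph V) (K : V → ℤ) : Prop :=
  ∀ x : V → ℤ, evalK K x ≡ G.pair x x [ZMOD 2]

/-- The set `Char(G)` of characteristic vectors, as a type. -/
def Ch (G : WGraph V) : Type _ := {K : V → ℤ // G.IsChar K}

/-- `K + 2x ∈ Hom(L(G),ℤ)`, for `K ∈ Hom(L(G),ℤ)` and `x ∈ L(G)` (a lattice vector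
is viewed in `Hom(L(G),ℤ)` via the pairing). -/
def chAdd (G : WGraph V) (K x : V → ℤ) : V → ℤ := fun u => K u + 2 * G.pair x (eVec {u})

/-- The difference `q(K + 2x) − q(K) = −((K,x) + (x,x))/2`, where `q(y) = −(y,y)/8`;
it is an integer whenever `K` is characteristic. -/
def qdiff (G : WGraph V) (K x : V → ℤ) : ℤ := (-(evalK K x + G.pair x x)) / 2

/-- The difference `q(K,S) − q(K) = max { q(K + 2E_T) − q(K) : T ⊆ S }`, where
`q(K,S) = max { q(K + 2 ∑_{j∈T} E_j) : T ⊆ S }`. -/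
def qrel (G : WGraph V) (K : V → ℤ) (S : Finset V) : ℤ :=
  S.powerset.sup' (Finset.powerset_nonempty S) fun T => G.qdiff K (eVec T)

/-- `G₊₁(v)`: increase the weight `m(v)` of the vertex `v` by one. -/
def bump (G : WGraph V) (v : V) : WGraph V where
  M u w := if u = v ∧ w = v then G.M u w + 1 else G.M u w
  symm u w := by
    have h := G.symm u w
    by_cases hu : u = v <;> by_cases hw : w = v <;> simp [hu, hw, h] <;>
      exact G.symm _ _

/-- `G − v`: delete the vertex `v` and all incident edges. -/
def delete (G : WGraph V) (v : V) : WGraph {u : V // u ≠ v} where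
  M u w := G.M u.1 w.1
  symm u w := G.symm u.1 w.1

theorem evalK_update (L y : V → ℤ) (v : V) (c : ℤ) :
    evalK (Function.update L v (L v + c)) y = evalK L y + c * y v := by
  unfold evalK
  have h : ∀ u, Function.update L v (L v + c) u * y u
      = L u * y u + (if u = v then c * y u else 0) := by
    intro u
    rcases eq_or_ne u v with hu | hu <;> simp [hu, Function.update] <;> ring
  simp only [h]
  rw [Finset.sum_add_distrib, Finset.sum_ite_eq' Finset.univ v (fun u => c * y u)]
  simp

theorem IsChar.chAdd {G : WGraph V} {K : V → ℤ} (h : G.IsChar K) (x : V → ℤ) :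
    G.IsChar (G.chAdd K x) := by
  intro y
  have key : evalK (G.chAdd K x) y
      = evalK K y + 2 * ∑ u, G.pair x (eVec {u}) * y u := by
    simp only [evalK, WGraph.chAdd, add_mul, mul_assoc]
    rw [Finset.sum_add_distrib, ← Finset.mul_sum]
  have hy := h y
  simp only [Int.ModEq] at hy ⊢
  rw [key]
  omega

theorem pair_bump (G : WGraph V) (v : V) (y : V → ℤ) :
    (G.bump v).pair y y = G.pair y y + y v * y v := by
  unfold pair bump
  have hu : ∀ u w : V, ((if u = v ∧ w = v then G.M u w + 1 else G.M u w) * y u * y w)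
      = G.M u w * y u * y w + (if u = v ∧ w = v then y u * y w else 0) := by
    intro u w
    rcases eq_or_ne u v with h | h <;> rcases eq_or_ne w v with h' | h' <;>
      simp [h, h'] <;> ring
  simp only [hu, Finset.sum_add_distrib]
  congr 1
  have hin : ∀ u : V, (∑ w, if u = v ∧ w = v then y u * y w else 0)
      = if u = v then y u * y v else 0 := by
    intro u
    rcases eq_or_ne u v with h | h
    · simp [h, Finset.sum_ite_eq' Finset.univ v (fun w => y v * y w)]
    · simp [h]
  rw [Finset.sum_congr rfl (fun u _ => hin u),
    Finset.sum_ite_eq' Finset.univ v (fun u => y u * y v)]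
  simp

theorem IsChar.bumpUpdate {G : WGraph V} {L : V → ℤ} (h : G.IsChar L) (v : V) (i : ℤ) :
    (G.bump v).IsChar (Function.update L v (L v + (2 * i + 1))) := by
  intro y
  have h1 := evalK_update L y v (2 * i + 1)
  have h2 := pair_bump G v y
  have hy := h y
  obtain ⟨k, hk⟩ := Int.even_mul_succ_self (y v - 1)
  have hk' : y v * y v - y v = 2 * k := by
    have h5 : (y v - 1) * (y v - 1 + 1) = y v * y v - y v := by ring
    omega
  have h3 : (2 * i + 1) * y v = 2 * (i * y v) + y v := by ring
  simp only [Int.ModEq] at hy ⊢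
  rw [h1, h2, h3]
  omega

theorem IsChar.evenUpdate {G : WGraph V} {L : V → ℤ} (h : G.IsChar L) (v : V) (k : ℤ) :
    G.IsChar (Function.update L v (L v + 2 * k)) := by
  intro y
  have h1 := evalK_update L y v (2 * k)
  have hy := h y
  have h3 : 2 * k * y v = 2 * (k * y v) := by ring
  simp only [Int.ModEq] at hy ⊢
  rw [h1, h3]
  omega

end WGraph

/-- Extension of `K ∈ Hom(L(G−v),ℤ)` to `Hom(L(G),ℤ)` by the value `t` at `v`:
the vector denoted `(K, t)`. -/
def extV (v : V) (K : {u : V // u ≠ v} → ℤ) (t : ℤ) : V → ℤ :=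
  fun u => if h : u = v then t else K ⟨u, h⟩

namespace WGraph

theorem IsChar.extChar {G : WGraph V} {v : V} {K : {u : V // u ≠ v} → ℤ}
    (h : (G.delete v).IsChar K) {t : ℤ} (ht : t ≡ G.M v v [ZMOD 2]) :
    G.IsChar (extV v K t) := by
  intro y
  have h1 : evalK (extV v K t) y = t * y v + evalK K (fun u => y u.1) := by
    unfold evalK
    rw [sum_split v (fun u => extV v K t u * y u)]
    congr 1
    · simp [extV]
    · exact Finset.sum_congr rfl fun u _ => by simp [extV, u.2]
  have h2 : G.pair y y = (G.delete v).pair (fun u => y u.1) (fun u => y u.1)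
      + G.M v v * (y v * y v)
      + 2 * ∑ u : {u : V // u ≠ v}, G.M v u.1 * y v * y u.1 := by
    have step1 : G.pair y y = (∑ w, G.M v w * y v * y w)
        + ∑ u : {u : V // u ≠ v}, ∑ w, G.M u.1 w * y u.1 * y w :=
      sum_split v (fun u => ∑ w, G.M u w * y u * y w)
    have step2 : (∑ w, G.M v w * y v * y w)
        = G.M v v * y v * y v + ∑ w : {w : V // w ≠ v}, G.M v w.1 * y v * y w.1 :=
      sum_split v _
    have step3 : ∀ u : {u : V // u ≠ v}, (∑ w, G.M u.1 w * y u.1 * y w)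
        = G.M u.1 v * y u.1 * y v + ∑ w : {w : V // w ≠ v}, G.M u.1 w.1 * y u.1 * y w.1 :=
      fun u => sum_split v _
    have step4 : (G.delete v).pair (fun u => y u.1) (fun u => y u.1)
        = ∑ u : {u : V // u ≠ v}, ∑ w : {w : V // w ≠ v}, G.M u.1 w.1 * y u.1 * y w.1 := rfl
    have hc : (∑ u : {u : V // u ≠ v}, G.M u.1 v * y u.1 * y v)
        = ∑ u : {u : V // u ≠ v}, G.M v u.1 * y v * y u.1 := by
      refine Finset.sum_congr rfl fun u _ => ?_
      rw [G.symm u.1 v]; ring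
    rw [step1, step2, Finset.sum_congr rfl (fun u _ => step3 u),
      Finset.sum_add_distrib, hc, step4]
    ring
  have hy := h (fun u => y u.1)
  obtain ⟨k, hk⟩ := Int.even_mul_succ_self (y v - 1)
  have hk' : y v * y v - y v = 2 * k := by
    have h5 : (y v - 1) * (y v - 1 + 1) = y v * y v - y v := by ring
    omega
  obtain ⟨a, ha⟩ : (2:ℤ) ∣ t - G.M v v := Int.ModEq.dvd ht.symm
  have e1 : t * y v = G.M v v * y v + 2 * (a * y v) := by
    have h6 : t = G.M v v + 2 * a := by omega
    rw [h6]; ring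
  have e2 : G.M v v * (y v * y v) = G.M v v * y v + 2 * (G.M v v * k) := by
    have h7 : y v * y v = y v + 2 * k := by omega
    rw [h7]; ring
  simp only [Int.ModEq] at hy ⊢
  rw [h1, h2, e1, e2]
  omega

variable {G : WGraph V}

/-- `K + 2x` as a characteristic vector. -/
def Ch.add (K : G.Ch) (x : V → ℤ) : G.Ch := ⟨G.chAdd K.1 x, K.2.chAdd x⟩

/-- For `K = (K', t) ∈ Char(G)`, the characteristic vector
`(K', t + 2i + 1) ∈ Char(G₊₁(v))`. -/
def Ch.bumpSh (K : G.Ch) (v : V) (i : ℤ) : (G.bump v).Ch :=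
  ⟨Function.update K.1 v (K.1 v + (2 * i + 1)), K.2.bumpUpdate v i⟩

/-- For `K = (K', t) ∈ Char(G)`, the characteristic vector `(K', t + 2k) ∈ Char(G)`. -/
def Ch.evenSh (K : G.Ch) (v : V) (k : ℤ) : G.Ch :=
  ⟨Function.update K.1 v (K.1 v + 2 * k), K.2.evenUpdate v k⟩

/-- For `K ∈ Char(G−v)`, the characteristic vector `(K, m(v) + 2i) ∈ Char(G)`. -/
def Ch.extend {v : V} (K : (G.delete v).Ch) (i : ℤ) : G.Ch :=
  ⟨extV v K.1 (G.M v v + 2 * i),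
    K.2.extChar (by show (G.M v v + 2 * i) % 2 = G.M v v % 2; omega)⟩

end WGraph

/-- `𝒯⁺₀ = 𝔽[U,U⁻¹]/(U·𝔽[U])` over `𝔽 = ℤ/2ℤ`: the coefficient at `d ∈ ℕ` records
the coefficient of `U^{−d}`. -/
def Tplus : Type := ℕ →₀ ZMod 2

instance : AddCommGroup Tplus := inferInstanceAs (AddCommGroup (ℕ →₀ ZMod 2))
instance : Module (ZMod 2) Tplus := inferInstanceAs (Module (ZMod 2) (ℕ →₀ ZMod 2))

/-- The element `U^{-m}` of `𝒯⁺₀`. -/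
def Um (m : ℕ) : Tplus := (Finsupp.single m 1 : ℕ →₀ ZMod 2)

/-- Multiplication by `U^e` on `𝒯⁺₀`: `U^e · U^{−d} = U^{−(d−e)}` (which is `0` if `d < e`). -/
def Upow (e : ℤ) (f : Tplus) : Tplus :=
  (Finsupp.comapDomain (fun d : ℕ => (d : ℤ) + e)
    (Finsupp.embDomain ⟨(Nat.cast : ℕ → ℤ), Nat.cast_injective⟩ (f : ℕ →₀ ZMod 2))
    (fun a _ b _ hab => Nat.cast_injective (add_right_cancel hab)) : ℕ →₀ ZMod 2)

theorem Upow_zero (e : ℤ) : Upow e 0 = 0 := by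
  show (Finsupp.comapDomain _ (Finsupp.embDomain _ (0 : ℕ →₀ ZMod 2)) _ : ℕ →₀ ZMod 2)
    = (0 : ℕ →₀ ZMod 2)
  ext d
  simp

/-- `C⁺(G)`: the `𝔽[U]`-module of finitely supported maps `Char(G) × 𝒫(V) → 𝒯⁺₀`. -/
abbrev Cplus (G : WGraph V) : Type _ := (G.Ch × Finset V) →₀ Tplus

/-- The action of (multiplication by) `U` on `C⁺(G)`. -/
def UC (G : WGraph V) (φ : Cplus G) : Cplus G := Finsupp.mapRange (Upow 1) (Upow_zero 1) φ

/-- `U^{−m} · (K,S)^∨`: the element of `C⁺(G)` supported at the single pair `(K,S)`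
with value `U^{−m}`. -/
def dual {G : WGraph V} (p : G.Ch × Finset V) (m : ℕ) : Cplus G :=
  Finsupp.single p (Um m)

/-- The exponent `q(K,S) − q(K, S−w)`. -/
def dExp₁ (G : WGraph V) (K : V → ℤ) (S : Finset V) (w : V) : ℤ :=
  G.qrel K S - G.qrel K (S.erase w)

/-- The exponent `q(K,S) − q(K + 2E_w, S−w)`. -/
def dExp₂ (G : WGraph V) (K : V → ℤ) (S : Finset V) (w : V) : ℤ :=
  G.qrel K S - (G.qdiff K (eVec {w}) + G.qrel (G.chAdd K (eVec {w})) (S.erase w))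

/-- `δ` is the operator on `C⁺(G)` given by
`δ(φ)(K,S) = ∑_{w∈S} [U^{q(K,S)−q(K,S−w)}·φ(K,S−w) + U^{q(K,S)−q(K+2E_w,S−w)}·φ(K+2E_w,S−w)]`. -/
def IsDelta (G : WGraph V) (δ : Cplus G → Cplus G) : Prop :=
  ∀ (φ : Cplus G) (K : G.Ch) (S : Finset V),
    δ φ (K, S) = ∑ w ∈ S,
      (Upow (dExp₁ G K.1 S w) (φ (K, S.erase w))
        + Upow (dExp₂ G K.1 S w) (φ (K.add (eVec {w}), S.erase w)))

/-- The exponent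
`c(i,(K,t),S) = [q((K,t),S) − q(K,t)] − [q'((K,t+2i+1),S) − q'(K,t+2i+1)] + i(i+1)/2`. -/
def cExp (G : WGraph V) (v : V) (i : ℤ) (K : G.Ch) (S : Finset V) : ℤ :=
  G.qrel K.1 S - (G.bump v).qrel (K.bumpSh v i).1 S + i * (i + 1) / 2

/-- `A` is the map `C⁺(G₊₁(v)) → C⁺(G)` given by
`A(φ)((K,t),S) = ∑_{i∈ℤ} U^{c(i,(K,t),S)} · φ((K,t+2i+1),S)`. -/
def IsA (G : WGraph V) (v : V) (A : Cplus (G.bump v) → Cplus G) : Prop :=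
  ∀ (φ : Cplus (G.bump v)) (K : G.Ch) (S : Finset V),
    A φ (K, S) = ∑ᶠ i : ℤ, Upow (cExp G v i K S) (φ (K.bumpSh v i, S))

/-- A subset `S ⊆ V − v` viewed as a subset of `V`. -/
def liftS (v : V) (S : Finset {u : V // u ≠ v}) : Finset V :=
  S.map ⟨Subtype.val, Subtype.val_injective⟩

/-- `B` is the map `C⁺(G) → C⁺(G−v)` given by
`B(φ)(K,S) = ∑_{i∈ℤ} φ((K, m(v)+2i), S)`. -/
def IsB (G : WGraph V) (v : V) (B : Cplus G → Cplus (G.delete v)) : Prop :=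
  ∀ (φ : Cplus G) (K : (G.delete v).Ch) (S : Finset {u : V // u ≠ v}),
    B φ (K, S) = ∑ᶠ i : ℤ, φ (K.extend i, liftS v S)

/-- `r((K,t),S) = q((K,t),S−v) − q((K,t)+2E_v,S−v)` (for `v ∈ S`). -/
def rVal (G : WGraph V) (v : V) (K : G.Ch) (S : Finset V) : ℤ :=
  G.qrel K.1 (S.erase v)
    - (G.qdiff K.1 (eVec {v}) + G.qrel (G.chAdd K.1 (eVec {v})) (S.erase v))

/-- The lattice cohomology `ℍ⁺`: the homology of the complex `(C⁺, δ)`. -/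
abbrev Hlat {G : WGraph V} (δ : Cplus G →ₗ[ZMod 2] Cplus G) : Type _ :=
  LinearMap.ker δ ⧸ (LinearMap.range δ).comap (LinearMap.ker δ).subtype

/-- `𝒟₁ ⊆ C⁺(G)`: the `𝔽`-submodule generated by the `U^{−m}·((K,t),S)^∨` with `v ∈ S`. -/
def D1 (G : WGraph V) (v : V) : Submodule (ZMod 2) (Cplus G) :=
  Submodule.span (ZMod 2)
    {χ | ∃ (K : G.Ch) (S : Finset V) (m : ℕ), v ∈ S ∧ χ = dual (K, S) m}

/-- `𝒟₂ ⊆ C⁺(G)`: the `𝔽`-submodule generated by the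
`U^{−m}·[((K,t),S)^∨ + ((K,t+2),S)^∨]` with `v ∉ S`. -/
def D2 (G : WGraph V) (v : V) : Submodule (ZMod 2) (Cplus G) :=
  Submodule.span (ZMod 2)
    {χ | ∃ (K : G.Ch) (S : Finset V) (m : ℕ), v ∉ S ∧
      χ = dual (K, S) m + dual (K.evenSh v 1, S) m}


section AuxProofCExp

variable {V : Type*} [Fintype V] [DecidableEq V]

private lemma aux_evalK_add (K x y : V → ℤ) :
    evalK K (fun u => x u + y u) = evalK K x + evalK K y := by
  simp [evalK, mul_add, Finset.sum_add_distrib]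

private lemma aux_pair_comm (G : WGraph V) (x y : V → ℤ) : G.pair x y = G.pair y x := by
  unfold WGraph.pair
  rw [Finset.sum_comm]
  exact Finset.sum_congr rfl fun u _ => Finset.sum_congr rfl fun w _ => by
    rw [G.symm]; ring

private lemma aux_pair_add (G : WGraph V) (x y : V → ℤ) :
    G.pair (fun u => x u + y u) (fun u => x u + y u)
      = G.pair x x + 2 * G.pair x y + G.pair y y := by
  have h : G.pair (fun u => x u + y u) (fun u => x u + y u)
      = G.pair x x + G.pair x y + G.pair y x + G.pair y y := by
    unfold WGraph.pair
    rw [← Finset.sum_add_distrib, ← Finset.sum_add_distrib, ← Finset.sum_add_distrib]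
    refine Finset.sum_congr rfl fun u _ => ?_
    rw [← Finset.sum_add_distrib, ← Finset.sum_add_distrib, ← Finset.sum_add_distrib]
    exact Finset.sum_congr rfl fun w _ => by ring
  rw [h, aux_pair_comm G y x]; ring

private lemma aux_pair_single (G : WGraph V) (a : V → ℤ) (u0 : V) :
    G.pair a (eVec {u0}) = ∑ u, G.M u u0 * a u := by
  unfold WGraph.pair eVec
  refine Finset.sum_congr rfl fun u _ => ?_
  have h : ∀ w, G.M u w * a u * (if w ∈ ({u0} : Finset V) then (1 : ℤ) else 0)
      = if w = u0 then G.M u u0 * a u else 0 := by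
    intro w; rcases eq_or_ne w u0 with h | h <;> simp [h]
  rw [Finset.sum_congr rfl fun w _ => h w,
    Finset.sum_ite_eq' Finset.univ u0 (fun _ => G.M u u0 * a u)]
  simp

private lemma aux_evalK_chAdd (G : WGraph V) (K a b : V → ℤ) :
    evalK (G.chAdd K a) b = evalK K b + 2 * G.pair a b := by
  unfold evalK WGraph.chAdd
  simp only [add_mul, Finset.sum_add_distrib]
  congr 1
  have h : ∀ u, 2 * G.pair a (eVec {u}) * b u = 2 * (G.pair a (eVec {u}) * b u) :=
    fun u => by ring
  rw [Finset.sum_congr rfl fun u _ => h u, ← Finset.mul_sum]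
  congr 1
  simp only [aux_pair_single]
  rw [show G.pair a b = ∑ u, ∑ w, G.M u w * a u * b w from rfl, Finset.sum_comm]
  exact Finset.sum_congr rfl fun u0 _ => by rw [Finset.sum_mul]

private lemma aux_char_even {G : WGraph V} {K : V → ℤ} (h : G.IsChar K) (x : V → ℤ) :
    2 ∣ (evalK K x + G.pair x x) := by
  have hx := h x
  simp only [Int.ModEq] at hx
  omega

private lemma aux_eVec_insert (v : V) (T : Finset V) (hv : v ∉ T) :
    eVec (insert v T) = fun u => eVec {v} u + eVec T u := by
  funext u
  unfold eVec
  rcases eq_or_ne u v with h | h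
  · subst h; simp [hv]
  · simp [h, Finset.mem_insert]

private lemma aux_qdiff_insert (G : WGraph V) (K : V → ℤ) (hK : G.IsChar K) (v : V)
    (T : Finset V) (hvT : v ∉ T) :
    G.qdiff K (eVec (insert v T))
      = G.qdiff K (eVec {v}) + G.qdiff (G.chAdd K (eVec {v})) (eVec T) := by
  have h2 := aux_evalK_add K (eVec {v}) (eVec T)
  have h3 := aux_pair_add G (eVec {v}) (eVec T)
  have h4 := aux_evalK_chAdd G K (eVec {v}) (eVec T)
  have h5 := aux_char_even hK (eVec {v})
  have h6 := aux_char_even hK (eVec T)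
  unfold WGraph.qdiff
  rw [aux_eVec_insert v T hvT, h2, h3, h4]
  omega

private lemma aux_qdiff_bumpSh (G : WGraph V) (v : V) (K : V → ℤ) (hK : G.IsChar K)
    (i : ℤ) (T : Finset V) :
    (G.bump v).qdiff (Function.update K v (K v + (2 * i + 1))) (eVec T)
      = G.qdiff K (eVec T) - (if v ∈ T then i + 1 else 0) := by
  have h1 := WGraph.evalK_update K (eVec T) v (2 * i + 1)
  have h2 := G.pair_bump v (eVec T)
  have h3 := aux_char_even hK (eVec T)
  unfold WGraph.qdiff
  rw [h1, h2]
  have hv : eVec T v = if v ∈ T then 1 else 0 := rfl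
  by_cases hvT : v ∈ T
  · rw [if_pos hvT] at hv ⊢
    rw [hv]
    simp only [mul_one]
    omega
  · rw [if_neg hvT] at hv ⊢
    rw [hv]
    simp only [mul_zero]
    omega

private lemma aux_sup'_add_const {α : Type*} {s : Finset α} (hs : s.Nonempty)
    (f : α → ℤ) (c : ℤ) :
    s.sup' hs (fun x => f x + c) = s.sup' hs f + c := by
  apply le_antisymm
  · exact Finset.sup'_le _ _ fun b hb => add_le_add_left (Finset.le_sup' f hb) c
  · rw [← le_sub_iff_add_le]
    exact Finset.sup'_le _ _ fun b hb =>
      le_sub_iff_add_le.mpr (Finset.le_sup' (fun x => f x + c) hb)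

private lemma aux_sup'_powerset_split (S : Finset V) (v : V) (hv : v ∈ S)
    (f : Finset V → ℤ) :
    S.powerset.sup' (Finset.powerset_nonempty S) f
      = max ((S.erase v).powerset.sup' (Finset.powerset_nonempty (S.erase v)) f)
          ((S.erase v).powerset.sup' (Finset.powerset_nonempty (S.erase v))
            fun T => f (insert v T)) := by
  apply le_antisymm
  · apply Finset.sup'_le
    intro T hT
    rw [Finset.mem_powerset] at hT
    by_cases hvT : v ∈ T
    · refine le_max_of_le_right ?_
      have h1 : T.erase v ∈ (S.erase v).powerset :=
        Finset.mem_powerset.mpr (Finset.erase_subset_erase v hT)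
      have h2 : insert v (T.erase v) = T := Finset.insert_erase hvT
      calc f T = f (insert v (T.erase v)) := by rw [h2]
        _ ≤ _ := Finset.le_sup' (fun T => f (insert v T)) h1
    · exact le_max_of_le_left
        (Finset.le_sup' f (Finset.mem_powerset.mpr (Finset.subset_erase.mpr ⟨hT, hvT⟩)))
  · apply max_le
    · apply Finset.sup'_le; intro T hT
      exact Finset.le_sup' f (Finset.mem_powerset.mpr
        ((Finset.mem_powerset.mp hT).trans (Finset.erase_subset v S)))
    · apply Finset.sup'_le; intro T hT
      refine Finset.le_sup' f (Finset.mem_powerset.mpr ?_)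
      rw [Finset.insert_subset_iff]
      exact ⟨hv, (Finset.mem_powerset.mp hT).trans (Finset.erase_subset v S)⟩

end AuxProofCExp

/-- Fix `(K,t)` and `S`, and set `r = r((K,t),S)` when `v ∈ S`.
If `v ∉ S`, then `c(i,(K,t),S) = 0` if and only if `i = 0` or `i = −1`.  If `v ∈ S`, then
`c(i,(K,t),S) = 0` if and only if (`i = 0` and `r ≥ 0`), or `i = −1`, or (`i = −2` and
`r ≤ 0`). -/
theorem cExp_eq_zero_iff (G : WGraph V) (v : V) (K : G.Ch) (S : Finset V) (i : ℤ) :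
    (v ∉ S → (cExp G v i K S = 0 ↔ i = 0 ∨ i = -1)) ∧
    (v ∈ S → (cExp G v i K S = 0 ↔
      (i = 0 ∧ 0 ≤ rVal G v K S) ∨ i = -1 ∨ (i = -2 ∧ rVal G v K S ≤ 0))) := by
  have hc0 : i = 0 → i * (i + 1) = 0 := by rintro rfl; norm_num
  have hc1 : i = -1 → i * (i + 1) = 0 := by rintro rfl; norm_num
  have hc2 : i = -2 → i * (i + 1) = 2 := by rintro rfl; norm_num
  have hc3 : 1 ≤ i → 2 ≤ i * (i + 1) := fun h => by nlinarith
  have hc4 : i ≤ -3 → 2 ≤ i * (i + 1) + 2 * i + 2 := fun h => by nlinarith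
  obtain ⟨m, hm⟩ := Int.even_mul_succ_self i
  have hb : ((K.bumpSh v i).1 : V → ℤ)
      = Function.update K.1 v (K.1 v + (2 * i + 1)) := rfl
  constructor
  · intro hvS
    have hq : (G.bump v).qrel (K.bumpSh v i).1 S = G.qrel K.1 S := by
      unfold WGraph.qrel
      refine Finset.sup'_congr _ rfl fun T hT => ?_
      rw [hb, aux_qdiff_bumpSh G v K.1 K.2 i T,
        if_neg (fun h => hvS (Finset.mem_powerset.mp hT h)), sub_zero]
    unfold cExp
    rw [hq]
    generalize hn : i * (i + 1) = n at hm hc0 hc1 hc2 hc3 hc4 ⊢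
    omega
  · intro hvS
    have key1 : G.qrel K.1 S
        = max (G.qrel K.1 (S.erase v))
            (G.qdiff K.1 (eVec {v}) + G.qrel (G.chAdd K.1 (eVec {v})) (S.erase v)) := by
      have hins : (S.erase v).powerset.sup' (Finset.powerset_nonempty (S.erase v))
            (fun T => G.qdiff K.1 (eVec (insert v T)))
          = G.qdiff K.1 (eVec {v}) + G.qrel (G.chAdd K.1 (eVec {v})) (S.erase v) := by
        have hcong : ∀ T ∈ (S.erase v).powerset,
            G.qdiff K.1 (eVec (insert v T))
              = G.qdiff (G.chAdd K.1 (eVec {v})) (eVec T) + G.qdiff K.1 (eVec {v}) := by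
          intro T hT
          rw [aux_qdiff_insert G K.1 K.2 v T
            (fun h => Finset.notMem_erase v S (Finset.mem_powerset.mp hT h))]
          ring
        rw [Finset.sup'_congr (Finset.powerset_nonempty (S.erase v)) rfl hcong,
          aux_sup'_add_const]
        unfold WGraph.qrel
        ring
      rw [← hins]
      unfold WGraph.qrel
      exact aux_sup'_powerset_split S v hvS _
    have key2 : (G.bump v).qrel (K.bumpSh v i).1 S
        = max (G.qrel K.1 (S.erase v))
            ((G.qdiff K.1 (eVec {v}) + G.qrel (G.chAdd K.1 (eVec {v})) (S.erase v))
              - (i + 1)) := by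
      have hleft : (S.erase v).powerset.sup' (Finset.powerset_nonempty (S.erase v))
            (fun T => (G.bump v).qdiff (K.bumpSh v i).1 (eVec T))
          = G.qrel K.1 (S.erase v) := by
        unfold WGraph.qrel
        refine Finset.sup'_congr _ rfl fun T hT => ?_
        rw [hb, aux_qdiff_bumpSh G v K.1 K.2 i T,
          if_neg (fun h => Finset.notMem_erase v S (Finset.mem_powerset.mp hT h)),
          sub_zero]
      have hright : (S.erase v).powerset.sup' (Finset.powerset_nonempty (S.erase v))
            (fun T => (G.bump v).qdiff (K.bumpSh v i).1 (eVec (insert v T)))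
          = (G.qdiff K.1 (eVec {v}) + G.qrel (G.chAdd K.1 (eVec {v})) (S.erase v))
              - (i + 1) := by
        have hcong : ∀ T ∈ (S.erase v).powerset,
            (G.bump v).qdiff (K.bumpSh v i).1 (eVec (insert v T))
              = G.qdiff (G.chAdd K.1 (eVec {v})) (eVec T)
                + (G.qdiff K.1 (eVec {v}) - (i + 1)) := by
          intro T hT
          rw [hb, aux_qdiff_bumpSh G v K.1 K.2 i (insert v T),
            if_pos (Finset.mem_insert_self v T),
            aux_qdiff_insert G K.1 K.2 v T
              (fun h => Finset.notMem_erase v S (Finset.mem_powerset.mp hT h))]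
          ring
        rw [Finset.sup'_congr (Finset.powerset_nonempty (S.erase v)) rfl hcong,
          aux_sup'_add_const]
        unfold WGraph.qrel
        ring
      rw [← hleft, ← hright]
      unfold WGraph.qrel
      exact aux_sup'_powerset_split S v hvS _
    unfold cExp rVal
    rw [key1, key2]
    set A := G.qrel K.1 (S.erase v) with hA
    set B := G.qdiff K.1 (eVec {v}) + G.qrel (G.chAdd K.1 (eVec {v})) (S.erase v) with hB
    have m1 := le_max_left A B
    have m2 := le_max_right A B
    have m3 := max_choice A B
    have m4 := le_max_left A (B - (i + 1))
    have m5 := le_max_right A (B - (i + 1))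
    have m6 := max_choice A (B - (i + 1))
    set M1 := max A B with hM1
    set M2 := max A (B - (i + 1)) with hM2
    generalize hn : i * (i + 1) = n at hm hc0 hc1 hc2 hc3 hc4 ⊢
    omega

end
end

section
/- For v ∈ S, every characteristic vector (K,t) of G, and every j ∈ ℤ, r((K,t+2j),S) = r((K,t),S) + j. -/
/-!
Common setup: the lattice cohomology complex of a weighted graph
(Némethi; J. Greene, "A surgery triangle for lattice cohomology").

A finite graph `G` with integer weights on vertices and signs on (multi-)edges is
encoded by its symmetric incidence data `M : V → V → ℤ`: for `u ≠ w` the entry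
`M u w` is the signed number of edges joining `u` and `w`, and `M u u = m(u)` is
the weight of `u`.  This is exactly the data of the intersection pairing `(·,·)`
on `L(G) = ℤ⟨E_u : u ∈ V⟩`, via `M u w = (E_u, E_w)`.
-/

noncomputable section

open Function

variable {V : Type*} [Fintype V] [DecidableEq V]

/-- For `v ∈ S`, every characteristic vector `(K,t)` of `G`, and every
`j ∈ ℤ`, `r((K,t+2j),S) = r((K,t),S) + j`. -/
theorem rVal_shift (G : WGraph V) (v : V) (S : Finset V) (hv : v ∈ S) (K : G.Ch) (j : ℤ) :
    rVal G v (K.evenSh v j) S = rVal G v K S + j := by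
  classical
  set K' := K.evenSh v j with hK'
  have hKv : ∀ u, u ≠ v → K'.1 u = K.1 u := by
    intro u hu
    simp [hK', WGraph.Ch.evenSh, Function.update, hu]
  have evcongr : ∀ (L₁ L₂ x : V → ℤ), (∀ u, u ≠ v → L₁ u = L₂ u) → x v = 0 →
      evalK L₁ x = evalK L₂ x := by
    intro L₁ L₂ x h hx
    unfold evalK
    refine Finset.sum_congr rfl fun u _ => ?_
    rcases eq_or_ne u v with rfl | hu
    · simp [hx]
    · rw [h u hu]
  have key : ∀ (L₁ L₂ : V → ℤ), (∀ u, u ≠ v → L₁ u = L₂ u) →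
      G.qrel L₁ (S.erase v) = G.qrel L₂ (S.erase v) := by
    intro L₁ L₂ h
    unfold WGraph.qrel
    refine Finset.sup'_congr _ rfl fun T hT => ?_
    rw [Finset.mem_powerset] at hT
    have hvT : v ∉ T := fun hmem => (Finset.mem_erase.mp (hT hmem)).1 rfl
    unfold WGraph.qdiff
    rw [evcongr _ _ _ h (by simp [eVec, hvT])]
  have hqrel1 : G.qrel K'.1 (S.erase v) = G.qrel K.1 (S.erase v) := key _ _ hKv
  have hqrel2 : G.qrel (G.chAdd K'.1 (eVec {v})) (S.erase v)
      = G.qrel (G.chAdd K.1 (eVec {v})) (S.erase v) := by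
    refine key _ _ fun u hu => ?_
    simp [WGraph.chAdd, hKv u hu]
  have heval : evalK K'.1 (eVec {v}) = evalK K.1 (eVec {v}) + 2 * j := by
    have h := WGraph.evalK_update K.1 (eVec {v}) v (2 * j)
    have hv1 : eVec ({v} : Finset V) v = 1 := by simp [eVec]
    have : K'.1 = Function.update K.1 v (K.1 v + 2 * j) := rfl
    rw [this, h, hv1, mul_one]
  have hchar : evalK K.1 (eVec {v}) % 2 = G.pair (eVec {v}) (eVec {v}) % 2 :=
    K.2 (eVec {v})
  have hq : G.qdiff K'.1 (eVec {v}) = G.qdiff K.1 (eVec {v}) - j := by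
    unfold WGraph.qdiff
    rw [heval]
    omega
  unfold rVal
  rw [hqrel1, hqrel2, hq]
  ring

end
end

section
/- The map A : C⁺(G₊₁(v)) → C⁺(G), A(φ)((K,t),S) = ∑_{i∈ℤ} U^{c(i,(K,t),S)}·φ((K,t+2i+1),S), is injective. -/
/-!
Common setup: the lattice cohomology complex of a weighted graph
(Némethi; J. Greene, "A surgery triangle for lattice cohomology").

A finite graph `G` with integer weights on vertices and signs on (multi-)edges is
encoded by its symmetric incidence data `M : V → V → ℤ`: for `u ≠ w` the entry
`M u w` is the signed number of edges joining `u` and `w`, and `M u u = m(u)` is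
the weight of `u`.  This is exactly the data of the intersection pairing `(·,·)`
on `L(G) = ℤ⟨E_u : u ∈ V⟩`, via `M u w = (E_u, E_w)`.
-/

noncomputable section

open Function

variable {V : Type*} [Fintype V] [DecidableEq V]

/-! ### Auxiliary lemmas for the proof of Statement 12 -/

/-- Unfold `Tplus` to a finitely supported function. -/
def tf (f : Tplus) : ℕ →₀ ZMod 2 := f

theorem tf_zero : tf 0 = 0 := rfl

theorem tf_sub (f g : Tplus) : tf (f - g) = tf f - tf g := rfl

theorem tf_inj {f g : Tplus} (h : tf f = tf g) : f = g := h

theorem Upow_apply (e : ℤ) (f : Tplus) (n : ℕ) :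
    tf (Upow e f) n = if 0 ≤ (n : ℤ) + e then tf f ((n : ℤ) + e).toNat else 0 := by
  show (Finsupp.comapDomain _ _ _) n = _
  show (Finsupp.embDomain ⟨(Nat.cast : ℕ → ℤ), Nat.cast_injective⟩ (tf f)) ((n : ℤ) + e) = _
  split_ifs with h
  · conv_lhs => rw [show (n : ℤ) + e = ((((n : ℤ) + e).toNat : ℕ) : ℤ) from
      (Int.toNat_of_nonneg h).symm]
    exact Finsupp.embDomain_apply_self _ (tf f) _
  · refine Finsupp.embDomain_notin_range _ (tf f) _ ?_
    rintro ⟨k, hk⟩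
    simp only [Function.Embedding.coeFn_mk] at hk
    omega

theorem Upow_sub (e : ℤ) (f g : Tplus) : Upow e (f - g) = Upow e f - Upow e g := by
  apply tf_inj
  apply Finsupp.ext
  intro n
  rw [tf_sub, Finsupp.sub_apply, Upow_apply, Upow_apply, Upow_apply, tf_sub]
  split_ifs <;> simp

theorem key_eval (F : ℤ → Tplus) (hfin : (Function.support F).Finite)
    (hsum : ∑ᶠ i, F i = 0) (d : ℕ) (hv : ∀ i, i ≠ -1 → tf (F i) d = 0) :
    tf (F (-1)) d = 0 := by
  by_cases hmem : F (-1) = 0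
  · rw [hmem, tf_zero]; rfl
  have hmem' : (-1 : ℤ) ∈ hfin.toFinset := by
    rw [Set.Finite.mem_toFinset, Function.mem_support]; exact hmem
  rw [finsum_eq_sum F hfin] at hsum
  have hc : tf (∑ i ∈ hfin.toFinset, F i) = ∑ i ∈ hfin.toFinset, tf (F i) := rfl
  have happ : ∑ i ∈ hfin.toFinset, tf (F i) d = 0 := by
    rw [← Finsupp.finset_sum_apply, ← hc, hsum]
    rfl
  rwa [Finset.sum_eq_single_of_mem (-1) hmem' (fun i _ hne => hv i hne)] at happ

/-- If `f ≠ 0` then `f` is nonzero at its top degree. -/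
theorem top_ne_zero (f : Tplus) (hf : f ≠ 0) : tf f ((tf f).support.sup id) ≠ 0 := by
  obtain ⟨k, hk, hs⟩ := Finset.exists_mem_eq_sup (tf f).support
    (Finsupp.support_nonempty_iff.mpr hf) id
  rw [hs]
  exact Finsupp.mem_support_iff.mp hk

/-- `f` vanishes above its top degree. -/
theorem above_top_eq_zero (f : Tplus) (k : ℕ) (hk : (tf f).support.sup id < k) :
    tf f k = 0 := by
  by_contra h
  have := Finset.le_sup (f := id) (Finsupp.mem_support_iff.mpr h)
  simp only [id_eq] at this
  omega

/-! ### Graph-side auxiliary lemmas -/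

theorem WGraph.isChar_two_dvd {G : WGraph V} {K : V → ℤ} (h : G.IsChar K) (x : V → ℤ) :
    2 ∣ evalK K x + G.pair x x := by
  have hx := h x
  simp only [Int.ModEq] at hx
  omega

/-- Removing a bump: if `L` is characteristic for `G₊₁(v)`, then shifting the value at `v`
by an odd number gives a characteristic vector for `G`. -/
theorem WGraph.IsChar.unbump {G : WGraph V} {v : V} {L : V → ℤ}
    (h : (G.bump v).IsChar L) (i : ℤ) :
    G.IsChar (Function.update L v (L v + (2 * i + 1))) := by
  intro y
  have h1 := evalK_update L y v (2 * i + 1)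
  have h2 := WGraph.pair_bump G v y
  have hy := h y
  rw [h2] at hy
  obtain ⟨k, hk⟩ := Int.even_mul_succ_self (y v - 1)
  have hk' : y v * y v - y v = 2 * k := by
    have h5 : (y v - 1) * (y v - 1 + 1) = y v * y v - y v := by ring
    omega
  have h3 : (2 * i + 1) * y v = 2 * (i * y v) + y v := by ring
  simp only [Int.ModEq] at hy ⊢
  rw [h1, h3]
  omega

/-- The basic `qdiff` comparison between `G₊₁(v)` and `G`. -/
theorem WGraph.qdiff_bump_eq (G : WGraph V) (v : V) (L : V → ℤ) (c : ℤ) (T : Finset V) :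
    (G.bump v).qdiff (Function.update L v (L v + c)) (eVec T)
      = G.qdiff (Function.update L v (L v + (c + 1))) (eVec T) := by
  unfold WGraph.qdiff
  congr 1
  have h1 := evalK_update L (eVec T) v c
  have h2 := evalK_update L (eVec T) v (c + 1)
  have h3 := WGraph.pair_bump G v (eVec T)
  have h4 : eVec T v * eVec T v = eVec T v := by
    simp only [eVec]
    split_ifs <;> norm_num
  rw [h1, h2, h3, h4]
  ring

/-- Shifting the value at `v` by `2` decreases `qdiff` by `(E_T)_v`. -/
theorem WGraph.qdiff_step (G : WGraph V) {K : V → ℤ} (hK : G.IsChar K) (v : V) (j : ℤ)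
    (T : Finset V) :
    G.qdiff (Function.update K v (K v + 2 * (j + 1))) (eVec T)
      = G.qdiff (Function.update K v (K v + 2 * j)) (eVec T) - eVec T v := by
  unfold WGraph.qdiff
  rw [evalK_update, evalK_update]
  obtain ⟨k, hk⟩ := WGraph.isChar_two_dvd hK (eVec T)
  have e1 : 2 * (j + 1) * eVec T v = 2 * (j * eVec T v) + 2 * eVec T v := by ring
  have e2 : 2 * j * eVec T v = 2 * (j * eVec T v) := by ring
  rw [e1, e2]
  omega

theorem eVec_nonneg (T : Finset V) (v : V) : 0 ≤ eVec T v := by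
  simp only [eVec]
  split_ifs <;> norm_num

theorem eVec_le_one (T : Finset V) (v : V) : eVec T v ≤ 1 := by
  simp only [eVec]
  split_ifs <;> norm_num

theorem WGraph.qrel_mono_raw (G : WGraph V) {K : V → ℤ} (hK : G.IsChar K) (v : V)
    (S : Finset V) (j : ℤ) :
    G.qrel (Function.update K v (K v + 2 * (j + 1))) S
      ≤ G.qrel (Function.update K v (K v + 2 * j)) S := by
  apply Finset.sup'_le
  intro T hT
  rw [WGraph.qdiff_step G hK v j T]
  have h1 : G.qdiff (Function.update K v (K v + 2 * j)) (eVec T)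
      ≤ G.qrel (Function.update K v (K v + 2 * j)) S :=
    Finset.le_sup' (fun T => G.qdiff (Function.update K v (K v + 2 * j)) (eVec T)) hT
  have h2 := eVec_nonneg T v
  omega

theorem WGraph.qrel_step_raw (G : WGraph V) {K : V → ℤ} (hK : G.IsChar K) (v : V)
    (S : Finset V) (j : ℤ) :
    G.qrel (Function.update K v (K v + 2 * j)) S
      ≤ G.qrel (Function.update K v (K v + 2 * (j + 1))) S + 1 := by
  apply Finset.sup'_le
  intro T hT
  have hq := WGraph.qdiff_step G hK v j T
  have h1 : G.qdiff (Function.update K v (K v + 2 * (j + 1))) (eVec T)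
      ≤ G.qrel (Function.update K v (K v + 2 * (j + 1))) S :=
    Finset.le_sup' (fun T => G.qdiff (Function.update K v (K v + 2 * (j + 1))) (eVec T)) hT
  have h2 := eVec_le_one T v
  omega

theorem WGraph.qrel_flat_raw (G : WGraph V) {K : V → ℤ} (hK : G.IsChar K) (v : V)
    (S : Finset V) (j : ℤ)
    (h : G.qrel (Function.update K v (K v + 2 * j)) S
      = G.qrel (Function.update K v (K v + 2 * (j + 1))) S) :
    G.qrel (Function.update K v (K v + 2 * (j + 1))) S
      = G.qrel (Function.update K v (K v + 2 * (j + 2))) S := by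
  obtain ⟨T, hT, hTeq⟩ := Finset.exists_mem_eq_sup' (Finset.powerset_nonempty S)
    (fun T => G.qdiff (Function.update K v (K v + 2 * (j + 1))) (eVec T))
  have hTeq' : G.qrel (Function.update K v (K v + 2 * (j + 1))) S
      = G.qdiff (Function.update K v (K v + 2 * (j + 1))) (eVec T) := hTeq
  by_cases hv : v ∈ T
  · exfalso
    have hq := WGraph.qdiff_step G hK v j T
    have hev : eVec T v = 1 := by
      simp only [eVec]
      simp [hv]
    have h1 : G.qdiff (Function.update K v (K v + 2 * j)) (eVec T)
        ≤ G.qrel (Function.update K v (K v + 2 * j)) S :=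
    Finset.le_sup' (fun T => G.qdiff (Function.update K v (K v + 2 * j)) (eVec T)) hT
    omega
  · have hev : eVec T v = 0 := by
      simp only [eVec]
      simp [hv]
    have hq2 := WGraph.qdiff_step G hK v (j + 1) T
    rw [show (2:ℤ) * (j + 1 + 1) = 2 * (j + 2) by ring] at hq2
    apply le_antisymm
    · have h1 : G.qdiff (Function.update K v (K v + 2 * (j + 2))) (eVec T)
        ≤ G.qrel (Function.update K v (K v + 2 * (j + 2))) S :=
    Finset.le_sup' (fun T => G.qdiff (Function.update K v (K v + 2 * (j + 2))) (eVec T)) hT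
      omega
    · have := WGraph.qrel_mono_raw G hK v S (j + 1)
      rwa [show (2:ℤ) * (j + 1 + 1) = 2 * (j + 2) by ring] at this

theorem WGraph.qrel_bump_raw (G : WGraph V) (v : V) (L : V → ℤ) (m : ℤ) (S : Finset V) :
    (G.bump v).qrel (Function.update L v (L v + (2 * m + 1))) S
      = G.qrel (Function.update L v (L v + 2 * (m + 1))) S := by
  unfold WGraph.qrel
  apply Finset.sup'_congr _ rfl
  intro T _
  have h := WGraph.qdiff_bump_eq G v L (2 * m + 1) T
  rwa [show (2 * m + 1 + 1 : ℤ) = 2 * (m + 1) by ring] at h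

/-! ### `Ch`-level lemmas -/

theorem WGraph.Ch.evenSh_bumpSh {G : WGraph V} (K : G.Ch) (v : V) (j i : ℤ) :
    (K.evenSh v j).bumpSh v i = K.bumpSh v (j + i) := by
  apply Subtype.ext
  show Function.update (Function.update K.1 v (K.1 v + 2 * j)) v
      (Function.update K.1 v (K.1 v + 2 * j) v + (2 * i + 1))
    = Function.update K.1 v (K.1 v + (2 * (j + i) + 1))
  rw [Function.update_self, Function.update_idem]
  congr 1
  ring

theorem WGraph.Ch.bumpSh_injective {G : WGraph V} (K : G.Ch) (v : V) :
    Function.Injective fun i : ℤ => K.bumpSh v i := by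
  intro i i' hii
  have h3 : Function.update K.1 v (K.1 v + (2 * i + 1)) v
      = Function.update K.1 v (K.1 v + (2 * i' + 1)) v :=
    congrFun (congrArg Subtype.val hii) v
  rw [Function.update_self, Function.update_self] at h3
  omega

theorem WGraph.Ch.qrel_bump' {G : WGraph V} (v : V) (K : G.Ch) (m : ℤ) (S : Finset V) :
    (G.bump v).qrel ((K.bumpSh v m).1) S = G.qrel ((K.evenSh v (m + 1)).1) S :=
  WGraph.qrel_bump_raw G v K.1 m S

theorem WGraph.Ch.qrel_mono' {G : WGraph V} (v : V) (K : G.Ch) (S : Finset V) (j : ℤ) :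
    G.qrel ((K.evenSh v (j + 1)).1) S ≤ G.qrel ((K.evenSh v j).1) S :=
  WGraph.qrel_mono_raw G K.2 v S j

theorem WGraph.Ch.qrel_step' {G : WGraph V} (v : V) (K : G.Ch) (S : Finset V) (j : ℤ) :
    G.qrel ((K.evenSh v j).1) S ≤ G.qrel ((K.evenSh v (j + 1)).1) S + 1 :=
  WGraph.qrel_step_raw G K.2 v S j

theorem WGraph.Ch.qrel_flat' {G : WGraph V} (v : V) (K : G.Ch) (S : Finset V) (j : ℤ)
    (h : G.qrel ((K.evenSh v j).1) S = G.qrel ((K.evenSh v (j + 1)).1) S) :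
    G.qrel ((K.evenSh v (j + 1)).1) S = G.qrel ((K.evenSh v (j + 2)).1) S :=
  WGraph.qrel_flat_raw G K.2 v S j h

theorem cExp_evenSh (G : WGraph V) (v : V) (K : G.Ch) (S : Finset V) (j i : ℤ) :
    cExp G v i (K.evenSh v j) S
      = G.qrel ((K.evenSh v j).1) S - G.qrel ((K.evenSh v (j + i + 1)).1) S
        + i * (i + 1) / 2 := by
  unfold cExp
  rw [WGraph.Ch.evenSh_bumpSh, WGraph.Ch.qrel_bump']

theorem support_upow_finite (G : WGraph V) (v : V) (φ : Cplus (G.bump v)) (K : G.Ch)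
    (S : Finset V) (e : ℤ → ℤ) :
    (Function.support fun i : ℤ => Upow (e i) (φ (K.bumpSh v i, S))).Finite := by
  have hsub : (Function.support fun i : ℤ => Upow (e i) (φ (K.bumpSh v i, S)))
      ⊆ (fun i : ℤ => ((K.bumpSh v i, S) : (G.bump v).Ch × Finset V)) ⁻¹' ↑φ.support := by
    intro i hi
    simp only [Function.mem_support] at hi
    simp only [Set.mem_preimage, Finset.mem_coe, Finsupp.mem_support_iff]
    intro h0
    exact hi (by rw [h0, Upow_zero])
  refine Set.Finite.subset (Set.Finite.preimage ?_ φ.support.finite_toSet) hsub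
  intro a _ b _ hab
  exact K.bumpSh_injective v (congrArg Prod.fst hab)

/-! ### The abstract injectivity argument -/

theorem abstract_main (a : ℤ → Tplus) (Q : ℤ → ℤ)
    (hafin : (Function.support a).Finite)
    (ha0 : a 0 ≠ 0)
    (hQmono : ∀ j : ℤ, Q (j + 1) ≤ Q j)
    (hQstep : ∀ j : ℤ, Q j ≤ Q (j + 1) + 1)
    (hQflat : ∀ j : ℤ, Q j = Q (j + 1) → Q (j + 1) = Q (j + 2))
    (hsum : ∀ j : ℤ, ∑ᶠ i : ℤ, Upow (Q j - Q (j + i + 1) + i * (i + 1) / 2) (a (j + i)) = 0) :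
    False := by
  -- extended monotonicity
  have hmono : ∀ x y : ℤ, x ≤ y → Q y ≤ Q x := by
    intro x y hxy
    refine Int.le_induction (motive := fun y _ => Q y ≤ Q x) le_rfl
      (fun n _ ih => le_trans (hQmono n) ih) y hxy
  have hstep : ∀ x y : ℤ, x ≤ y → Q x ≤ Q y + (y - x) := by
    intro x y hxy
    refine Int.le_induction (motive := fun y _ => Q x ≤ Q y + (y - x)) (by omega)
      (fun n _ ih => ?_) y hxy
    have := hQstep n
    omega
  -- properties of the exponents
  have hE0 : ∀ j i : ℤ, 0 ≤ Q j - Q (j + i + 1) + i * (i + 1) / 2 := by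
    intro j i
    rcases le_or_gt (-1) i with hi | hi
    · have h1 : Q (j + i + 1) ≤ Q j := hmono j (j + i + 1) (by omega)
      have h2 : 0 ≤ i * (i + 1) := by
        rcases (by omega : i = -1 ∨ 0 ≤ i) with h | h
        · subst h; norm_num
        · nlinarith
      omega
    · have h1 : Q (j + i + 1) ≤ Q j + (j - (j + i + 1)) := hstep (j + i + 1) j (by omega)
      have h2 : -2 * (i + 1) ≤ i * (i + 1) := by nlinarith
      omega
  have hE1 : ∀ j i : ℤ, 1 ≤ i → 1 ≤ Q j - Q (j + i + 1) + i * (i + 1) / 2 := by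
    intro j i hi
    have h1 : Q (j + i + 1) ≤ Q j := hmono j _ (by omega)
    have h2 : 2 ≤ i * (i + 1) := by nlinarith
    omega
  have hE3 : ∀ j i : ℤ, i ≤ -3 → 1 ≤ Q j - Q (j + i + 1) + i * (i + 1) / 2 := by
    intro j i hi
    have h1 : Q (j + i + 1) ≤ Q j + (j - (j + i + 1)) := hstep (j + i + 1) j (by omega)
    have h2 : -2 * i ≤ i * (i + 1) := by nlinarith
    omega
  -- finiteness of the terms in each sum
  have hFfin : ∀ j : ℤ,
      (Function.support fun i : ℤ =>
        Upow (Q j - Q (j + i + 1) + i * (i + 1) / 2) (a (j + i))).Finite := by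
    intro j
    refine Set.Finite.subset
      (Set.Finite.preimage ((add_right_injective j).injOn) hafin) ?_
    intro i hi
    simp only [Function.mem_support] at hi
    simp only [Set.mem_preimage, Function.mem_support]
    intro h0
    exact hi (by rw [h0, Upow_zero])
  -- degree set-up
  set F : Finset ℤ := hafin.toFinset with hF
  have hF0 : (0 : ℤ) ∈ F := by rw [hF, Set.Finite.mem_toFinset]; exact ha0
  have hFne : F.Nonempty := ⟨0, hF0⟩
  set d : ℕ := F.sup' hFne (fun m => (tf (a m)).support.sup id) with hd
  set M : Finset ℤ := F.filter (fun m => (tf (a m)).support.sup id = d) with hM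
  have hMne : M.Nonempty := by
    obtain ⟨m, hm, hmd⟩ := Finset.exists_mem_eq_sup' hFne
      (fun m => (tf (a m)).support.sup id)
    exact ⟨m, Finset.mem_filter.mpr ⟨hm, hmd.symm⟩⟩
  have hMtop : ∀ m ∈ M, tf (a m) d ≠ 0 := by
    intro m hm
    obtain ⟨hmF, hmd⟩ := Finset.mem_filter.mp hm
    have hne : a m ≠ 0 := by rwa [hF, Set.Finite.mem_toFinset, Function.mem_support] at hmF
    have := top_ne_zero (a m) hne
    rwa [hmd] at this
  have hdegle : ∀ m : ℤ, (tf (a m)).support.sup id ≤ d ∨ a m = 0 := by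
    intro m
    by_cases hmF : m ∈ F
    · left; exact Finset.le_sup' (fun m => (tf (a m)).support.sup id) hmF
    · right
      rw [hF, Set.Finite.mem_toFinset, Function.mem_support, not_not] at hmF
      exact hmF
  -- vanishing of individual terms at degree `d`
  have hterm0 : ∀ j i : ℤ, a (j + i) = 0 →
      tf (Upow (Q j - Q (j + i + 1) + i * (i + 1) / 2) (a (j + i))) d = 0 := by
    intro j i hz
    rw [hz, Upow_zero, tf_zero]
    rfl
  have htermdeg : ∀ j i : ℤ, (tf (a (j + i))).support.sup id < d →
      tf (Upow (Q j - Q (j + i + 1) + i * (i + 1) / 2) (a (j + i))) d = 0 := by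
    intro j i hlt
    rw [Upow_apply, if_pos (by have := hE0 j i; omega)]
    apply above_top_eq_zero
    have := hE0 j i
    omega
  have hterm1 : ∀ j i : ℤ, 1 ≤ Q j - Q (j + i + 1) + i * (i + 1) / 2 →
      tf (Upow (Q j - Q (j + i + 1) + i * (i + 1) / 2) (a (j + i))) d = 0 := by
    intro j i h1
    rcases hdegle (j + i) with hle | hz
    · rw [Upow_apply, if_pos (by omega)]
      apply above_top_eq_zero
      omega
    · exact hterm0 j i hz
  -- the two distinguished maximizers
  set smin : ℤ := M.min' hMne with hsmin
  set smax : ℤ := M.max' hMne with hsmax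
  have hsminM : smin ∈ M := M.min'_mem hMne
  have hsmaxM : smax ∈ M := M.max'_mem hMne
  by_cases hbad : (smin + 1) ∈ M ∧ Q (smin + 1) = Q (smin + 2)
  · -- the "flat" case: evaluate the relation at `j = smax + 1`
    have hflat : ∀ y : ℤ, smin + 1 ≤ y → Q y = Q (y + 1) := by
      refine fun y hy => Int.le_induction (motive := fun y _ => Q y = Q (y + 1)) ?_
        (fun n _ ih => ?_) y hy
      · show Q (smin + 1) = Q (smin + 1 + 1)
        have := hbad.2
        rwa [show smin + 1 + 1 = smin + 2 by ring]
      · show Q (n + 1) = Q (n + 1 + 1)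
        have := hQflat n ih
        rwa [show n + 1 + 1 = n + 2 by ring]
    have hle : smin + 1 ≤ smax := Finset.le_max' M (smin + 1) hbad.1
    have hkey := key_eval
      (fun i => Upow (Q (smax + 1) - Q (smax + 1 + i + 1) + i * (i + 1) / 2) (a (smax + 1 + i)))
      (hFfin (smax + 1)) (hsum (smax + 1)) d ?_
    · -- the anchor term is nonzero: contradiction
      have heq0 : Q (smax + 1) - Q (smax + 1 + (-1) + 1) + (-1) * ((-1) + 1) / 2 = 0 := by
        rw [show smax + 1 + (-1) + 1 = smax + 1 by ring]
        norm_num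
      rw [heq0, Upow_apply, if_pos (by omega)] at hkey
      rw [show ((d : ℤ) + 0).toNat = d by omega] at hkey
      rw [show smax + 1 + (-1) = smax by ring] at hkey
      exact hMtop smax hsmaxM hkey
    · -- all other terms vanish at degree `d`
      intro i hne
      by_cases hz : a (smax + 1 + i) = 0
      · exact hterm0 (smax + 1) i hz
      by_cases hm : (smax + 1 + i) ∈ M
      · have hile : smax + 1 + i ≤ smax := Finset.le_max' M _ hm
        by_cases hi2 : i = -2
        · subst hi2
          apply hterm1
          have hq : Q smax = Q (smax + 1) := hflat smax hle
          rw [show smax + 1 + (-2) + 1 = smax by ring]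
          norm_num
          omega
        · exact hterm1 _ _ (hE3 _ _ (by omega))
      · apply htermdeg
        rcases hdegle (smax + 1 + i) with hled | hz'
        · have hdne : (tf (a (smax + 1 + i))).support.sup id ≠ d := by
            intro hdd
            exact hm (Finset.mem_filter.mpr
              ⟨by rw [hF, Set.Finite.mem_toFinset, Function.mem_support]; exact hz, hdd⟩)
          omega
        · exact absurd hz' hz
  · -- the "non-flat" case: evaluate the relation at `j = smin + 1`
    have hkey := key_eval
      (fun i => Upow (Q (smin + 1) - Q (smin + 1 + i + 1) + i * (i + 1) / 2) (a (smin + 1 + i)))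
      (hFfin (smin + 1)) (hsum (smin + 1)) d ?_
    · have heq0 : Q (smin + 1) - Q (smin + 1 + (-1) + 1) + (-1) * ((-1) + 1) / 2 = 0 := by
        rw [show smin + 1 + (-1) + 1 = smin + 1 by ring]
        norm_num
      rw [heq0, Upow_apply, if_pos (by omega)] at hkey
      rw [show ((d : ℤ) + 0).toNat = d by omega] at hkey
      rw [show smin + 1 + (-1) = smin by ring] at hkey
      exact hMtop smin hsminM hkey
    · intro i hne
      by_cases hz : a (smin + 1 + i) = 0
      · exact hterm0 (smin + 1) i hz
      by_cases hm : (smin + 1 + i) ∈ M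
      · have hile : smin ≤ smin + 1 + i := Finset.min'_le M _ hm
        by_cases hi0 : i = 0
        · subst hi0
          apply hterm1
          have hm' : (smin + 1) ∈ M := by rwa [show smin + 1 + 0 = smin + 1 by ring] at hm
          have hqne : Q (smin + 1) ≠ Q (smin + 2) := fun hq => hbad ⟨hm', hq⟩
          have hq1 : Q (smin + 2) ≤ Q (smin + 1) := by
            have := hQmono (smin + 1)
            rwa [show smin + 1 + 1 = smin + 2 by ring] at this
          rw [show smin + 1 + 0 + 1 = smin + 2 by ring]
          norm_num
          omega
        · exact hterm1 _ _ (hE1 _ _ (by omega))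
      · apply htermdeg
        rcases hdegle (smin + 1 + i) with hled | hz'
        · have hdne : (tf (a (smin + 1 + i))).support.sup id ≠ d := by
            intro hdd
            exact hm (Finset.mem_filter.mpr
              ⟨by rw [hF, Set.Finite.mem_toFinset, Function.mem_support]; exact hz, hdd⟩)
          omega
        · exact absurd hz' hz

/-- The kernel of `A` is trivial. -/
theorem core_injectivity (G : WGraph V) (v : V) (xi : Cplus (G.bump v))
    (h : ∀ (K : G.Ch) (S : Finset V),
      ∑ᶠ i : ℤ, Upow (cExp G v i K S) (xi (K.bumpSh v i, S)) = 0) :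
    xi = 0 := by
  ext p
  obtain ⟨K', S⟩ := p
  by_contra hne
  -- the base characteristic vector `K₀` of `G` with `K₀.bumpSh v 0 = K'`
  set K₀ : G.Ch := ⟨Function.update K'.1 v (K'.1 v + (2 * (-1) + 1)), K'.2.unbump (-1)⟩
    with hK₀
  have hbase : K₀.bumpSh v 0 = K' := by
    apply Subtype.ext
    show Function.update K₀.1 v (K₀.1 v + (2 * 0 + 1)) = K'.1
    rw [hK₀]
    show Function.update (Function.update K'.1 v (K'.1 v + (2 * (-1) + 1))) v
        (Function.update K'.1 v (K'.1 v + (2 * (-1) + 1)) v + (2 * 0 + 1)) = K'.1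
    rw [Function.update_self, Function.update_idem]
    rw [show K'.1 v + (2 * (-1) + 1) + (2 * 0 + 1) = K'.1 v by ring]
    exact Function.update_eq_self v K'.1
  refine abstract_main (fun m => xi (K₀.bumpSh v m, S))
    (fun j => G.qrel ((K₀.evenSh v j).1) S) ?_ ?_ ?_ ?_ ?_ ?_
  · -- finite support
    have hsub : (Function.support fun m : ℤ => xi (K₀.bumpSh v m, S))
        ⊆ (fun m : ℤ => ((K₀.bumpSh v m, S) : (G.bump v).Ch × Finset V)) ⁻¹' ↑xi.support := by
      intro m hm
      simp only [Function.mem_support] at hm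
      simp only [Set.mem_preimage, Finset.mem_coe, Finsupp.mem_support_iff]
      exact hm
    refine Set.Finite.subset (Set.Finite.preimage ?_ xi.support.finite_toSet) hsub
    intro x _ y _ hxy
    exact K₀.bumpSh_injective v (congrArg Prod.fst hxy)
  · -- nonzero at 0
    show xi (K₀.bumpSh v 0, S) ≠ 0
    rw [hbase]
    exact hne
  · exact fun j => WGraph.Ch.qrel_mono' v K₀ S j
  · exact fun j => WGraph.Ch.qrel_step' v K₀ S j
  · exact fun j => WGraph.Ch.qrel_flat' v K₀ S j
  · -- the summation relations
    intro j
    have hh := h (K₀.evenSh v j) S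
    have hcong : ∀ i : ℤ,
        Upow (cExp G v i (K₀.evenSh v j) S) (xi ((K₀.evenSh v j).bumpSh v i, S))
          = Upow (G.qrel ((K₀.evenSh v j).1) S - G.qrel ((K₀.evenSh v (j + i + 1)).1) S
              + i * (i + 1) / 2) (xi (K₀.bumpSh v (j + i), S)) := by
      intro i
      rw [cExp_evenSh, WGraph.Ch.evenSh_bumpSh]
    rw [finsum_congr hcong] at hh
    exact hh

/-- The map `A : C⁺(G₊₁(v)) → C⁺(G)`,
`A(φ)((K,t),S) = ∑_{i∈ℤ} U^{c(i,(K,t),S)}·φ((K,t+2i+1),S)`, is injective. -/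
theorem A_injective (G : WGraph V) (v : V)
    (A : Cplus (G.bump v) → Cplus G) (hA : IsA G v A) :
    Function.Injective A := by
  intro φ₁ φ₂ heq
  have hcore : φ₁ - φ₂ = 0 := by
    apply core_injectivity G v
    intro K S
    have h1 := hA φ₁ K S
    have h2 := hA φ₂ K S
    have he : A φ₁ (K, S) = A φ₂ (K, S) := by rw [heq]
    rw [h1, h2] at he
    have hfin1 := support_upow_finite G v φ₁ K S (fun i => cExp G v i K S)
    have hfin2 := support_upow_finite G v φ₂ K S (fun i => cExp G v i K S)
    have hdiff : ∀ i : ℤ, Upow (cExp G v i K S) ((φ₁ - φ₂) (K.bumpSh v i, S))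
        = Upow (cExp G v i K S) (φ₁ (K.bumpSh v i, S))
          - Upow (cExp G v i K S) (φ₂ (K.bumpSh v i, S)) := by
      intro i
      rw [Finsupp.sub_apply, Upow_sub]
    rw [finsum_congr hdiff, finsum_sub_distrib hfin1 hfin2, he, sub_self]
  exact sub_eq_zero.mp hcore

end
end

section
/- The composite B ∘ A : C⁺(G₊₁(v)) → C⁺(G−v) is the zero map; equivalently, im A ⊆ ker B. -/
/-!
Common setup: the lattice cohomology complex of a weighted graph
(Némethi; J. Greene, "A surgery triangle for lattice cohomology").

A finite graph `G` with integer weights on vertices and signs on (multi-)edges is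
encoded by its symmetric incidence data `M : V → V → ℤ`: for `u ≠ w` the entry
`M u w` is the signed number of edges joining `u` and `w`, and `M u u = m(u)` is
the weight of `u`.  This is exactly the data of the intersection pairing `(·,·)`
on `L(G) = ℤ⟨E_u : u ∈ V⟩`, via `M u w = (E_u, E_w)`.
-/

noncomputable section

open Function

variable {V : Type*} [Fintype V] [DecidableEq V]

/-! ### Auxiliary lemmas for Statement 14 -/

theorem Tplus_add_self (x : Tplus) : x + x = 0 := by
  have h : ∀ y : ℕ →₀ ZMod 2, y + y = 0 := by
    intro y
    ext d
    rw [Finsupp.add_apply, Finsupp.zero_apply]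
    have h2 : ∀ a : ZMod 2, a + a = 0 := by decide
    exact h2 _
  exact h x

theorem Upow_vanish (x : Tplus) : ∃ E : ℤ, ∀ e : ℤ, E ≤ e → Upow e x = 0 := by
  refine ⟨(((x : ℕ →₀ ZMod 2).support.sup id : ℕ) : ℤ) + 1, fun e he => ?_⟩
  show (Finsupp.comapDomain _ _ _ : ℕ →₀ ZMod 2) = 0
  ext d
  show (Finsupp.embDomain ⟨(Nat.cast : ℕ → ℤ), Nat.cast_injective⟩ (x : ℕ →₀ ZMod 2)) ((d : ℤ) + e) = 0
  by_cases hr : ((d : ℤ) + e) ∈ Set.range (Nat.cast : ℕ → ℤ)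
  · obtain ⟨n, hn⟩ := hr
    have h1 : ((d : ℤ) + e) = (⟨Nat.cast, Nat.cast_injective⟩ : ℕ ↪ ℤ) n := hn.symm
    rw [h1]; refine (Finsupp.embDomain_apply_self _ _ _).trans ?_
    by_contra hx
    have hmem : n ∈ (x : ℕ →₀ ZMod 2).support := Finsupp.mem_support_iff.2 hx
    have h2 : id n ≤ (x : ℕ →₀ ZMod 2).support.sup id := Finset.le_sup hmem
    simp only [id] at h2
    omega
  · exact Finsupp.embDomain_notin_range _ _ _ hr

theorem qrel_update (G' : WGraph V) (L : V → ℤ) (v : V) (c : ℤ) (S : Finset V)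
    (hv : v ∉ S) : G'.qrel (Function.update L v c) S = G'.qrel L S := by
  unfold WGraph.qrel
  refine Finset.sup'_congr _ rfl fun T hT => ?_
  rw [Finset.mem_powerset] at hT
  have hvT : v ∉ T := fun h => hv (hT h)
  unfold WGraph.qdiff
  have h1 : Function.update L v c = Function.update L v (L v + (c - L v)) := by
    simp
  rw [h1, WGraph.evalK_update]
  have h2 : eVec T v = 0 := by simp [eVec, hvT]
  rw [h2, mul_zero, add_zero]

theorem consec_bounds (j : ℤ) : 2 * j ≤ j * (j + 1) ∧ (-2) * j - 2 ≤ j * (j + 1) := by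
  constructor
  · rcases le_or_gt 1 j with h | h
    · nlinarith
    · nlinarith
  · rcases le_or_gt (-1) j with h | h
    · nlinarith
    · nlinarith

theorem tri_bounds (j : ℤ) : j ≤ j * (j + 1) / 2 ∧ -j - 1 ≤ j * (j + 1) / 2 := by
  obtain ⟨k, hk⟩ := Int.even_mul_succ_self j
  have h1 := consec_bounds j
  omega

theorem tri_neg (j : ℤ) : (-1 - j) * ((-1 - j) + 1) / 2 = j * (j + 1) / 2 := by
  have h : (-1 - j) * ((-1 - j) + 1) = j * (j + 1) := by ring
  rw [h]

namespace WGraph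

theorem extend_fst (G : WGraph V) (v : V) (K : (G.delete v).Ch) (i : ℤ) :
    (K.extend i).1 = Function.update (K.extend 0).1 v (G.M v v + 2 * i) := by
  funext u
  rcases eq_or_ne u v with h | h <;>
    simp [Ch.extend, extV, Function.update, h]

theorem extend_bumpSh_fst (G : WGraph V) (v : V) (K : (G.delete v).Ch) (i j : ℤ) :
    ((K.extend i).bumpSh v j).1
      = Function.update ((K.extend 0).bumpSh v 0).1 v (G.M v v + 2 * i + (2 * j + 1)) := by
  funext u
  rcases eq_or_ne u v with h | h <;>
    simp [Ch.extend, Ch.bumpSh, extV, Function.update, h]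

theorem extend_bumpSh_fst' (G : WGraph V) (v : V) (K : (G.delete v).Ch) (i j : ℤ)
    (u : V) : ((K.extend i).bumpSh v j).1 u
      = if h : u = v then G.M v v + 2 * i + 2 * j + 1 else K.1 ⟨u, h⟩ := by
  rcases eq_or_ne u v with h | h
  · subst h
    show Function.update ((K.extend i).1) u ((K.extend i).1 u + (2 * j + 1)) u = _
    rw [Function.update_self, dif_pos rfl]
    show extV u K.1 (G.M u u + 2 * i) u + (2 * j + 1) = _
    rw [extV, dif_pos rfl]
    ring
  · simp [Ch.extend, Ch.bumpSh, extV, Function.update, h]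

theorem extend_bumpSh_eq (G : WGraph V) (v : V) (K : (G.delete v).Ch) (i j : ℤ) :
    ((K.extend i).bumpSh v j : (G.bump v).Ch) = (K.extend (i + j)).bumpSh v 0 := by
  apply Subtype.ext
  funext u
  rw [extend_bumpSh_fst', extend_bumpSh_fst']
  rcases eq_or_ne u v with h | h
  · rw [dif_pos h, dif_pos h]
    ring
  · rw [dif_neg h, dif_neg h]

theorem extend_bumpSh_val (G : WGraph V) (v : V) (K : (G.delete v).Ch) (n : ℤ) :
    ((K.extend n).bumpSh v 0).1 v = G.M v v + 2 * n + 1 := by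
  rw [extend_bumpSh_fst', dif_pos rfl]
  ring

end WGraph

/-- The composite `B ∘ A : C⁺(G₊₁(v)) → C⁺(G−v)` is the zero map;
equivalently, `im A ⊆ ker B`. -/
theorem B_comp_A_eq_zero (G : WGraph V) (v : V)
    (A : Cplus (G.bump v) → Cplus G) (hA : IsA G v A)
    (B : Cplus G → Cplus (G.delete v)) (hB : IsB G v B) :
    ∀ φ : Cplus (G.bump v), B (A φ) = 0 := by
  intro φ
  ext p
  obtain ⟨K, S⟩ := p
  rw [Finsupp.zero_apply, hB (A φ) K S]
  set S' : Finset V := liftS v S with hS'def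
  have hvS' : v ∉ S' := by
    intro h
    rw [hS'def, liftS, Finset.mem_map] at h
    obtain ⟨u, _, hu⟩ := h
    exact u.2 hu
  -- the constant part of the exponent
  set C : ℤ := G.qrel (K.extend 0).1 S'
      - (G.bump v).qrel ((K.extend 0).bumpSh v 0).1 S' with hCdef
  -- the inner function
  set g : ℤ → Tplus := fun n => φ ((K.extend n).bumpSh v 0, S') with hgdef
  set f : ℤ × ℤ → Tplus :=
      fun p => Upow (C + p.2 * (p.2 + 1) / 2) (g (p.1 + p.2)) with hfdef
  -- exponent computation
  have hcExp : ∀ i j : ℤ, cExp G v j (K.extend i) S' = C + j * (j + 1) / 2 := by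
    intro i j
    unfold cExp
    rw [G.extend_fst v K i, qrel_update G _ v _ S' hvS',
      G.extend_bumpSh_fst v K i j, qrel_update (G.bump v) _ v _ S' hvS']
  -- each summand of the double sum is `f (i, j)`
  have hterm : ∀ i j : ℤ,
      Upow (cExp G v j (K.extend i) S') (φ ((K.extend i).bumpSh v j, S')) = f (i, j) := by
    intro i j
    rw [hcExp i j, G.extend_bumpSh_eq v K i j]
  -- rewrite the goal as a double finsum of `f`
  have hstep : ∀ i : ℤ, A φ (K.extend i, S') = ∑ᶠ j : ℤ, f (i, j) := by
    intro i
    rw [hA φ (K.extend i) S']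
    exact finsum_congr fun j => hterm i j
  rw [show (∑ᶠ i : ℤ, A φ (K.extend i, liftS v S)) = ∑ᶠ i : ℤ, ∑ᶠ j : ℤ, f (i, j) from
    finsum_congr fun i => hstep i]
  -- finiteness of the support of g
  have hmapinj : Function.Injective
      (fun n : ℤ => (((K.extend n).bumpSh v 0 : (G.bump v).Ch), S')) := by
    intro a b hab
    have h1 := congrArg (fun q : ((G.bump v).Ch × Finset V) => q.1.1 v) hab
    simp only [G.extend_bumpSh_val] at h1
    omega
  have hg : (Function.support g).Finite := by
    have hsub : Function.support g ⊆
        (fun n : ℤ => (((K.extend n).bumpSh v 0 : (G.bump v).Ch), S')) ⁻¹'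
          (φ.support : Set ((G.bump v).Ch × Finset V)) := by
      intro n hn
      exact Finsupp.mem_support_iff.2 hn
    exact Set.Finite.subset
      (Set.Finite.preimage hmapinj.injOn φ.support.finite_toSet) hsub
  -- a uniform vanishing bound
  have hbound : ∃ E : ℤ, ∀ n e : ℤ, E ≤ e → Upow e (g n) = 0 := by
    choose Eb hEb using fun x : Tplus => Upow_vanish x
    rcases Set.eq_empty_or_nonempty (Function.support g) with he | _
    · exact ⟨0, fun n e _ => by
        have : g n = 0 := by
          by_contra hne
          exact absurd (Set.eq_empty_iff_forall_notMem.1 he n) (by simp [hne])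
        rw [this, Upow_zero]⟩
    · refine ⟨(hg.toFinset.sup fun n => (Eb (g n)).toNat : ℕ), fun n e hne => ?_⟩
      by_cases hn : g n = 0
      · rw [hn, Upow_zero]
      · have hmem : n ∈ hg.toFinset := by simp [hn]
        have h2 : (Eb (g n)).toNat ≤ hg.toFinset.sup fun n => (Eb (g n)).toNat :=
          Finset.le_sup (f := fun n => (Eb (g n)).toNat) hmem
        exact hEb (g n) e (by omega)
  obtain ⟨E, hE⟩ := hbound
  -- finiteness of the support of f
  have hfin : (Function.support f).Finite := by
    have hsub : Function.support f ⊆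
        (fun q : ℤ × ℤ => (q.1 - q.2, q.2)) ''
          ((Function.support g) ×ˢ (Set.Icc (C - E - 2) (E - C + 2) : Set ℤ)) := by
      rintro ⟨i, j⟩ hij
      have hg0 : g (i + j) ≠ 0 := by
        intro h
        apply hij
        show Upow (C + j * (j + 1) / 2) (g (i + j)) = 0
        rw [h, Upow_zero]
      have hU : ¬ (E ≤ C + j * (j + 1) / 2) := by
        intro h
        exact hij (hE (i + j) _ h)
      have htb := tri_bounds j
      refine ⟨(i + j, j), ⟨hg0, ?_⟩, by simp⟩
      simp only [Set.mem_Icc]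
      omega
    exact Set.Finite.subset ((hg.prod (Set.finite_Icc _ _)).image _) hsub
  rw [← finsum_curry f hfin, finsum_eq_sum f hfin]
  -- kill the sum with the involution (i, j) ↦ (i + 2j + 1, −1−j)
  have hfsigma : ∀ p : ℤ × ℤ, f (p.1 + 2 * p.2 + 1, -1 - p.2) = f p := by
    rintro ⟨i, j⟩
    show Upow (C + (-1 - j) * ((-1 - j) + 1) / 2) (g ((i + 2 * j + 1) + (-1 - j)))
      = Upow (C + j * (j + 1) / 2) (g (i + j))
    rw [tri_neg j, show (i + 2 * j + 1) + (-1 - j) = i + j by ring]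
  refine Finset.sum_involution
    (fun p _ => (p.1 + 2 * p.2 + 1, -1 - p.2)) ?_ ?_ ?_ ?_
  · intro p _
    rw [hfsigma p]
    exact Tplus_add_self _
  · rintro ⟨i, j⟩ _ _
    intro h
    have := (Prod.ext_iff.1 h).2
    simp at this
    omega
  · intro p hp
    rw [Set.Finite.mem_toFinset] at hp ⊢
    show f _ ≠ 0
    rw [hfsigma p]
    exact hp
  · rintro ⟨i, j⟩ _
    simp only [Prod.mk.injEq]
    constructor <;> ring

end
end

section
/- 𝒟 ⊆ im A: every element of the submodule 𝒟 = 𝒟₁ ⊕ 𝒟₂ of C⁺(G) lies in the image of the map A : C⁺(G₊₁(v)) → C⁺(G). -/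
/-!
Common setup: the lattice cohomology complex of a weighted graph
(Némethi; J. Greene, "A surgery triangle for lattice cohomology").

A finite graph `G` with integer weights on vertices and signs on (multi-)edges is
encoded by its symmetric incidence data `M : V → V → ℤ`: for `u ≠ w` the entry
`M u w` is the signed number of edges joining `u` and `w`, and `M u u = m(u)` is
the weight of `u`.  This is exactly the data of the intersection pairing `(·,·)`
on `L(G) = ℤ⟨E_u : u ∈ V⟩`, via `M u w = (E_u, E_w)`.
-/

noncomputable section

open Function

variable {V : Type*} [Fintype V] [DecidableEq V]

/-! ### Auxiliary development -/

section Aux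

/-- An element of `𝒯⁺₀` as a finitely supported function. -/
def toF (f : Tplus) : ℕ →₀ ZMod 2 := f

/-- Coefficient of `U^{-d}` in an element of `𝒯⁺₀`. -/
def tapp (f : Tplus) (d : ℕ) : ZMod 2 := toF f d

theorem Tplus.ext' {f g : Tplus} (h : ∀ d, tapp f d = tapp g d) : f = g := Finsupp.ext h

theorem tapp_add (f g : Tplus) (d : ℕ) : tapp (f + g) d = tapp f d + tapp g d :=
  Finsupp.add_apply _ _ _

theorem tapp_zero (d : ℕ) : tapp 0 d = 0 := rfl

theorem tapp_Um (m d : ℕ) : tapp (Um m) d = if m = d then 1 else 0 :=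
  Finsupp.single_apply

theorem Upow_coeff (e : ℤ) (f : Tplus) (d : ℕ) :
    tapp (Upow e f) d = if 0 ≤ (d : ℤ) + e then tapp f ((d : ℤ) + e).toNat else 0 := by
  show (Finsupp.embDomain ⟨(Nat.cast : ℕ → ℤ), Nat.cast_injective⟩ (f : ℕ →₀ ZMod 2))
      ((d : ℤ) + e) = _
  split_ifs with h
  · have h2 : (d : ℤ) + e = ((((d : ℤ) + e).toNat : ℕ) : ℤ) := (Int.toNat_of_nonneg h).symm
    rw [h2]
    exact Finsupp.embDomain_apply_self _ _ _
  · refine Finsupp.embDomain_notin_range _ _ _ ?_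
    rintro ⟨n, hn⟩
    simp only [Function.Embedding.coeFn_mk] at hn
    omega

theorem Upow_add' (e : ℤ) (f g : Tplus) : Upow e (f + g) = Upow e f + Upow e g := by
  apply Tplus.ext'
  intro d
  rw [tapp_add, Upow_coeff, Upow_coeff, Upow_coeff]
  split_ifs with h
  · rw [tapp_add]
  · simp

theorem Upow_id (f : Tplus) : Upow 0 f = f := by
  apply Tplus.ext'
  intro d
  rw [Upow_coeff]
  simp

theorem Upow_Um (e : ℤ) (m : ℕ) :
    Upow e (Um m) = if e ≤ (m : ℤ) then Um ((m : ℤ) - e).toNat else 0 := by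
  apply Tplus.ext'
  intro d
  rw [Upow_coeff]
  by_cases h1 : e ≤ (m : ℤ)
  · rw [if_pos h1]
    split_ifs with h
    · rw [tapp_Um, tapp_Um]
      by_cases h2 : ((d : ℤ) + e).toNat = m
      · rw [if_pos (by omega), if_pos (by omega : ((m : ℤ) - e).toNat = d)]
      · rw [if_neg (by omega), if_neg (by omega : ¬((m : ℤ) - e).toNat = d)]
    · rw [tapp_Um, if_neg (by omega : ¬((m : ℤ) - e).toNat = d)]
  · rw [if_neg h1]
    split_ifs with h
    · rw [tapp_Um, if_neg (by omega)]
      rfl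
    · rfl

theorem cplus_add_self {G : WGraph V} (φ : Cplus G) : φ + φ = 0 := by
  apply Finsupp.ext
  intro p
  rw [Finsupp.add_apply, Finsupp.zero_apply]
  apply Tplus.ext'
  intro d
  rw [tapp_add, tapp_zero]
  have : ∀ c : ZMod 2, c + c = 0 := by decide
  exact this _

namespace WGraph

variable {G : WGraph V}

theorem Ch.ext' {K L : G.Ch} (h : K.1 = L.1) : K = L := Subtype.ext h

theorem IsChar.unbumpUpdate {v : V} {L : V → ℤ} (h : (G.bump v).IsChar L) (i : ℤ) :
    G.IsChar (Function.update L v (L v + (-(2 * i) - 1))) := by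
  intro y
  have h1 := evalK_update L y v (-(2 * i) - 1)
  have h2 := G.pair_bump v y
  have hy := h y
  obtain ⟨k, hk⟩ := Int.even_mul_succ_self (y v - 1)
  have hk' : y v * y v - y v = 2 * k := by
    have h5 : (y v - 1) * (y v - 1 + 1) = y v * y v - y v := by ring
    omega
  have h3 : (-(2 * i) - 1) * y v = 2 * (-(i * y v)) - y v := by ring
  simp only [Int.ModEq] at hy ⊢
  rw [h1, h2] at *
  omega

/-- For `K' = (K, t') ∈ Char(G₊₁(v))`, the characteristic vector
`(K, t' − 2i − 1) ∈ Char(G)`. -/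
def Ch.unbump {v : V} (K' : (G.bump v).Ch) (i : ℤ) : G.Ch :=
  ⟨Function.update K'.1 v (K'.1 v + (-(2 * i) - 1)), K'.2.unbumpUpdate i⟩

@[simp] theorem Ch.bumpSh_val_v (K : G.Ch) (v : V) (i : ℤ) :
    (K.bumpSh v i).1 v = K.1 v + (2 * i + 1) := by
  simp [Ch.bumpSh]

@[simp] theorem Ch.evenSh_val_v (K : G.Ch) (v : V) (k : ℤ) :
    (K.evenSh v k).1 v = K.1 v + 2 * k := by
  simp [Ch.evenSh]

@[simp] theorem Ch.unbump_val_v {v : V} (K' : (G.bump v).Ch) (i : ℤ) :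
    (K'.unbump i).1 v = K'.1 v + (-(2 * i) - 1) := by
  simp [Ch.unbump]

theorem Ch.bumpSh_val_ne (K : G.Ch) (v : V) (i : ℤ) {u : V} (h : u ≠ v) :
    (K.bumpSh v i).1 u = K.1 u := by
  simp [Ch.bumpSh, Function.update_of_ne h]

theorem Ch.evenSh_val_ne (K : G.Ch) (v : V) (k : ℤ) {u : V} (h : u ≠ v) :
    (K.evenSh v k).1 u = K.1 u := by
  simp [Ch.evenSh, Function.update_of_ne h]

theorem Ch.unbump_val_ne {v : V} (K' : (G.bump v).Ch) (i : ℤ) {u : V} (h : u ≠ v) :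
    (K'.unbump i).1 u = K'.1 u := by
  simp [Ch.unbump, Function.update_of_ne h]

theorem Ch.unbump_bumpSh (K : G.Ch) (v : V) (i j : ℤ) :
    (K.bumpSh v j).unbump i = K.evenSh v (j - i) := by
  apply Ch.ext'
  funext u
  by_cases h : u = v
  · subst h
    rw [Ch.unbump_val_v, Ch.bumpSh_val_v, Ch.evenSh_val_v]
    ring
  · rw [Ch.unbump_val_ne _ _ h, Ch.bumpSh_val_ne _ _ _ h, Ch.evenSh_val_ne _ _ _ h]

theorem Ch.bumpSh_unbump {v : V} (K' : (G.bump v).Ch) (i : ℤ) :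
    (K'.unbump i).bumpSh v i = K' := by
  apply Ch.ext'
  funext u
  by_cases h : u = v
  · subst h
    rw [Ch.bumpSh_val_v, Ch.unbump_val_v]
    ring
  · rw [Ch.bumpSh_val_ne _ _ _ h, Ch.unbump_val_ne _ _ h]

@[simp] theorem Ch.evenSh_zero (K : G.Ch) (v : V) : K.evenSh v 0 = K := by
  apply Ch.ext'
  funext u
  by_cases h : u = v
  · subst h; rw [Ch.evenSh_val_v]; ring
  · rw [Ch.evenSh_val_ne _ _ _ h]

theorem Ch.evenSh_evenSh (K : G.Ch) (v : V) (j k : ℤ) :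
    (K.evenSh v j).evenSh v k = K.evenSh v (j + k) := by
  apply Ch.ext'
  funext u
  by_cases h : u = v
  · subst h; rw [Ch.evenSh_val_v, Ch.evenSh_val_v, Ch.evenSh_val_v]; ring
  · rw [Ch.evenSh_val_ne _ _ _ h, Ch.evenSh_val_ne _ _ _ h, Ch.evenSh_val_ne _ _ _ h]

theorem Ch.unbump_inj {v : V} (K' : (G.bump v).Ch) {i j : ℤ}
    (h : K'.unbump i = K'.unbump j) : i = j := by
  have := congrFun (congrArg Subtype.val h) v
  rw [Ch.unbump_val_v, Ch.unbump_val_v] at this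
  omega

end WGraph

end Aux


section Aux2

variable {G : WGraph V}

theorem evalK_eVec (K : V → ℤ) (T : Finset V) : evalK K (eVec T) = ∑ u ∈ T, K u := by
  unfold evalK eVec
  rw [Finset.sum_congr rfl (fun u _ => by rw [mul_ite, mul_one, mul_zero])]
  rw [Finset.sum_ite_mem Finset.univ T K, Finset.univ_inter]

theorem ediv_key (X c : ℤ) : -(X + 2 * c) / 2 = -X / 2 - c := by
  have h : -(X + 2 * c) = -X + (-c) * 2 := by ring
  rw [h, Int.add_mul_ediv_right _ _ two_ne_zero]
  ring

theorem qdiff_eVec (G : WGraph V) (K : V → ℤ) (T : Finset V) :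
    G.qdiff K (eVec T) = -(∑ u ∈ T, K u + G.pair (eVec T) (eVec T)) / 2 := by
  rw [WGraph.qdiff, evalK_eVec]

theorem qdiff_congr {K₁ K₂ : V → ℤ} {T : Finset V} (h : ∀ u ∈ T, K₁ u = K₂ u) :
    G.qdiff K₁ (eVec T) = G.qdiff K₂ (eVec T) := by
  rw [qdiff_eVec, qdiff_eVec, Finset.sum_congr rfl h]

theorem qdiff_update {K : V → ℤ} {v : V} (c : ℤ) {T : Finset V} (hv : v ∈ T) :
    G.qdiff (Function.update K v (K v + 2 * c)) (eVec T) = G.qdiff K (eVec T) - c := by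
  rw [qdiff_eVec, qdiff_eVec]
  rw [Finset.sum_update_of_mem hv, ← Finset.erase_eq]
  rw [← Finset.add_sum_erase T K hv]
  have h : K v + 2 * c + ∑ x ∈ T.erase v, K x + G.pair (eVec T) (eVec T)
      = (K v + ∑ x ∈ T.erase v, K x + G.pair (eVec T) (eVec T)) + 2 * c := by ring
  rw [h, ediv_key]

theorem pair_bump_eVec (G : WGraph V) (v : V) (T : Finset V) :
    (G.bump v).pair (eVec T) (eVec T)
      = G.pair (eVec T) (eVec T) + (if v ∈ T then 1 else 0) := by
  rw [G.pair_bump v (eVec T)]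
  congr 1
  unfold eVec
  split_ifs <;> norm_num

theorem qdiff_bump_unbump {v : V} (K' : (G.bump v).Ch) (i : ℤ) (T : Finset V) :
    (G.bump v).qdiff K'.1 (eVec T)
      = G.qdiff (K'.unbump i).1 (eVec T) - (if v ∈ T then (i + 1) else 0) := by
  by_cases hv : v ∈ T
  · rw [if_pos hv, qdiff_eVec, qdiff_eVec, pair_bump_eVec, if_pos hv]
    have hs : ∑ u ∈ T, (K'.unbump i).1 u
        = ∑ u ∈ T, K'.1 u - (2 * i + 1) := by
      rw [← Finset.add_sum_erase T K'.1 hv, ← Finset.add_sum_erase T (K'.unbump i).1 hv]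
      rw [WGraph.Ch.unbump_val_v,
        Finset.sum_congr rfl (fun u hu => WGraph.Ch.unbump_val_ne K' i (Finset.ne_of_mem_erase hu))]
      ring
    rw [hs]
    have h : ∑ u ∈ T, K'.1 u + (G.pair (eVec T) (eVec T) + 1)
        = (∑ u ∈ T, K'.1 u - (2 * i + 1) + G.pair (eVec T) (eVec T)) + 2 * (i + 1) := by ring
    rw [h, ediv_key]
  · rw [if_neg hv, qdiff_eVec, qdiff_eVec, pair_bump_eVec, if_neg hv, add_zero, sub_zero]
    rw [Finset.sum_congr rfl
      (fun u hu => WGraph.Ch.unbump_val_ne K' i (fun h => hv (h ▸ hu)))]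

theorem qrel_congr {K₁ K₂ : V → ℤ} {S : Finset V} (h : ∀ u ∈ S, K₁ u = K₂ u) :
    G.qrel K₁ S = G.qrel K₂ S := by
  unfold WGraph.qrel
  exact Finset.sup'_congr _ rfl
    (fun T hT => qdiff_congr (fun u hu => h u (Finset.mem_powerset.1 hT hu)))

/-- `b(K,S) = max { q(K + 2E_{T ∪ v}) − q(K) : T ⊆ S − v }`. -/
def bsup (G : WGraph V) (v : V) (K : V → ℤ) (S : Finset V) : ℤ :=
  (S.erase v).powerset.sup' (Finset.powerset_nonempty _)
    fun T => G.qdiff K (eVec (insert v T))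

theorem qrel_split {v : V} {K : V → ℤ} {S : Finset V} (hv : v ∈ S) :
    G.qrel K S = max (G.qrel K (S.erase v)) (bsup G v K S) := by
  unfold WGraph.qrel bsup
  apply le_antisymm
  · apply Finset.sup'_le
    intro T hT
    have hTS : T ⊆ S := Finset.mem_powerset.1 hT
    by_cases hvT : v ∈ T
    · refine le_trans ?_ (le_max_right _ _)
      have hm : T.erase v ∈ (S.erase v).powerset :=
        Finset.mem_powerset.2 (Finset.erase_subset_erase v hTS)
      have := Finset.le_sup' (fun T₀ => G.qdiff K (eVec (insert v T₀))) hm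
      rwa [Finset.insert_erase hvT] at this
    · refine le_trans ?_ (le_max_left _ _)
      have hm : T ∈ (S.erase v).powerset :=
        Finset.mem_powerset.2 (fun u hu => Finset.mem_erase.2 ⟨fun h => hvT (h ▸ hu), hTS hu⟩)
      exact Finset.le_sup' (fun T₀ => G.qdiff K (eVec T₀)) hm
  · apply max_le
    · apply Finset.sup'_le
      intro T hT
      exact Finset.le_sup' (fun T₀ => G.qdiff K (eVec T₀)) (Finset.mem_powerset.2
        ((Finset.mem_powerset.1 hT).trans (Finset.erase_subset _ _)))
    · apply Finset.sup'_le
      intro T hT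
      exact Finset.le_sup' (fun T₀ => G.qdiff K (eVec T₀)) (Finset.mem_powerset.2
        (Finset.insert_subset hv ((Finset.mem_powerset.1 hT).trans (Finset.erase_subset _ _))))

theorem sup'_sub {α : Type*} {s : Finset α} (H : s.Nonempty) (f : α → ℤ) (c : ℤ) :
    s.sup' H (fun x => f x - c) = s.sup' H f - c := by
  have := Finset.comp_sup'_eq_sup'_comp (α := ℤ) (γ := ℤ) H (f := f) (fun x => x - c)
    (fun x y => (max_sub_sub_right x y c).symm)
  exact this.symm

theorem bsup_update {v : V} (K : V → ℤ) (c : ℤ) (S : Finset V) :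
    bsup G v (Function.update K v (K v + 2 * c)) S = bsup G v K S - c := by
  unfold bsup
  rw [Finset.sup'_congr _ rfl
    (fun T _ => qdiff_update c (Finset.mem_insert_self v T)), sup'_sub]

theorem bsup_congr {v : V} {K₁ K₂ : V → ℤ} (hvv : K₁ v = K₂ v)
    (h : ∀ u, u ≠ v → K₁ u = K₂ u) (S : Finset V) :
    bsup G v K₁ S = bsup G v K₂ S := by
  unfold bsup
  refine Finset.sup'_congr _ rfl (fun T _ => qdiff_congr (fun u _ => ?_))
  by_cases hu : u = v
  · rw [hu]; exact hvv
  · exact h u hu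

theorem bsup_bump_unbump {v : V} (K' : (G.bump v).Ch) (i : ℤ) (S : Finset V) :
    bsup (G.bump v) v K'.1 S = bsup G v (K'.unbump i).1 S - (i + 1) := by
  unfold bsup
  rw [Finset.sup'_congr _ rfl (fun T _ => by
    rw [qdiff_bump_unbump K' i, if_pos (Finset.mem_insert_self v T)]), sup'_sub]

theorem qrel_bump_unbump {v : V} (K' : (G.bump v).Ch) (i : ℤ) {S' : Finset V}
    (hS' : v ∉ S') : (G.bump v).qrel K'.1 S' = G.qrel (K'.unbump i).1 S' := by
  unfold WGraph.qrel
  refine Finset.sup'_congr _ rfl (fun T hT => ?_)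
  rw [qdiff_bump_unbump K' i,
    if_neg (fun h => hS' (Finset.mem_powerset.1 hT h)), sub_zero]

end Aux2


section Aux3

theorem Tnonneg (i : ℤ) : 0 ≤ i * (i + 1) / 2 := by
  rcases le_or_gt 0 i with h | h
  · exact Int.ediv_nonneg (mul_nonneg h (by omega)) (by norm_num)
  · exact Int.ediv_nonneg (by nlinarith) (by norm_num)

theorem Tpos {i : ℤ} (h : i ≤ -2 ∨ 1 ≤ i) : 1 ≤ i * (i + 1) / 2 := by
  have h2 : 2 ≤ i * (i + 1) := by
    rcases h with h | h
    · nlinarith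
    · nlinarith
  have := Int.ediv_le_ediv (by norm_num : (0:ℤ) < 2) h2
  omega

theorem T_ge_self {i : ℤ} (h : 0 ≤ i) : i ≤ i * (i + 1) / 2 := by
  have h1 : i * (i + 1) = (i * i - i) + i * 2 := by ring
  rw [h1, Int.add_mul_ediv_right _ _ two_ne_zero]
  have h2 : 0 ≤ (i * i - i) / 2 := Int.ediv_nonneg (by nlinarith) (by norm_num)
  omega

theorem T_succ (i : ℤ) : (i + 1) * (i + 2) / 2 = i * (i + 1) / 2 + (i + 1) := by
  have h1 : (i + 1) * (i + 2) = i * (i + 1) + (i + 1) * 2 := by ring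
  rw [h1, Int.add_mul_ediv_right _ _ two_ne_zero]

theorem T_symm (i : ℤ) : (-1 - i) * ((-1 - i) + 1) / 2 = i * (i + 1) / 2 := by
  congr 1
  ring

/-- The function `g(a,b,i) = max(a, b+i) − max(a, b−1) + i(i+1)/2`. -/
def gfun (a b i : ℤ) : ℤ := max a (b + i) - max a (b - 1) + i * (i + 1) / 2

theorem g_neg_one (a b : ℤ) : gfun a b (-1) = 0 := by
  have h : (-1 : ℤ) * (-1 + 1) / 2 = 0 := by norm_num
  unfold gfun
  omega

theorem g_zero (a b : ℤ) : gfun a b 0 = max a b - max a (b - 1) := by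
  have h : (0 : ℤ) * (0 + 1) / 2 = 0 := by norm_num
  unfold gfun
  omega

theorem g_neg_two (a b : ℤ) : gfun a b (-2) = max a (b - 2) - max a (b - 1) + 1 := by
  have h : (-2 : ℤ) * (-2 + 1) / 2 = 1 := by norm_num
  unfold gfun
  omega

theorem g_pos {a b i : ℤ} (h : i ≤ -3 ∨ 1 ≤ i) : 1 ≤ gfun a b i := by
  unfold gfun
  rcases h with h | h
  · -- max a (b-1) + (i+1) ≤ max a (b+i), and (i+1)(i+2)/2 ≥ 0
    have h1 : max a (b - 1) + (i + 1) ≤ max a (b + i) := by omega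
    have h2 : 0 ≤ (i + 1) * (i + 2) / 2 := by
      have := Tnonneg (i + 1)
      have h3 : (i + 1) * (i + 1 + 1) = (i + 1) * (i + 2) := by ring
      rwa [h3] at this
    have h4 := T_succ i
    have h5 : 2 ≤ (i + 1) * (i + 2) := by nlinarith
    have h6 := Int.ediv_le_ediv (by norm_num : (0:ℤ) < 2) h5
    omega
  · have h1 : max a (b - 1) ≤ max a (b + i) := by omega
    have h2 := Tpos (Or.inr h)
    omega

theorem g_nonneg (a b i : ℤ) : 0 ≤ gfun a b i := by
  rcases le_or_gt i (-3) with h | h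
  · exact le_trans (by norm_num) (g_pos (Or.inl h))
  rcases le_or_gt 1 i with h' | h'
  · exact le_trans (by norm_num) (g_pos (Or.inr h'))
  interval_cases i
  · rw [g_neg_two]; omega
  · rw [g_neg_one]
  · rw [g_zero]; omega

theorem g_big {a b i m : ℤ} (h : m + 2 ≤ i ∨ i ≤ -m - 3) (hm : 0 ≤ m) :
    m < gfun a b i := by
  unfold gfun
  rcases h with h | h
  · have h1 : max a (b - 1) ≤ max a (b + i) := by omega
    have h2 := T_ge_self (le_trans (by omega) h)
    omega
  · have h1 : max a (b - 1) + (i + 1) ≤ max a (b + i) := by omega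
    have h4 := T_succ i
    have h5 : -i - 2 ≤ (i + 1) * (i + 2) / 2 := by
      have h6 := T_ge_self (i := -i - 2) (by omega)
      have h7 : (-i - 2) * (-i - 2 + 1) = (i + 1) * (i + 2) := by ring
      rwa [h7] at h6
    omega

namespace WGraph

variable {G : WGraph V}

theorem cExp_unbump_mem {v : V} {S : Finset V} (hv : v ∈ S)
    (K' : (G.bump v).Ch) (i : ℤ) :
    cExp G v i (K'.unbump i) S
      = gfun (G.qrel (K'.unbump 0).1 (S.erase v)) (bsup G v (K'.unbump 0).1 S) i := by
  have heq : (K'.unbump i).1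
      = Function.update (K'.unbump 0).1 v ((K'.unbump 0).1 v + 2 * (-i)) := by
    funext u
    by_cases h : u = v
    · subst h
      rw [Function.update_self, Ch.unbump_val_v, Ch.unbump_val_v]
      ring
    · rw [Function.update_of_ne h, Ch.unbump_val_ne _ _ h, Ch.unbump_val_ne _ _ h]
  have h1 : G.qrel (K'.unbump i).1 S
      = max (G.qrel (K'.unbump 0).1 (S.erase v)) (bsup G v (K'.unbump 0).1 S + i) := by
    rw [qrel_split hv]
    congr 1
    · refine qrel_congr (fun u hu => ?_)
      have hne : u ≠ v := (Finset.mem_erase.1 hu).1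
      rw [Ch.unbump_val_ne _ _ hne, Ch.unbump_val_ne _ _ hne]
    · rw [heq, bsup_update]
      ring
  have h2 : (G.bump v).qrel ((K'.unbump i).bumpSh v i).1 S
      = max (G.qrel (K'.unbump 0).1 (S.erase v)) (bsup G v (K'.unbump 0).1 S - 1) := by
    rw [Ch.bumpSh_unbump, qrel_split hv]
    congr 1
    · exact qrel_bump_unbump K' 0 (fun h => (Finset.mem_erase.1 h).1 rfl)
    · have := bsup_bump_unbump K' 0 S
      rw [this]
      ring
  unfold cExp gfun
  rw [h1, h2]

theorem cExp_unbump_notmem {v : V} {S : Finset V} (hv : v ∉ S)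
    (K' : (G.bump v).Ch) (i : ℤ) :
    cExp G v i (K'.unbump i) S = i * (i + 1) / 2 := by
  unfold cExp
  rw [Ch.bumpSh_unbump, qrel_bump_unbump K' i hv]
  omega

end WGraph

end Aux3


section Aux4

open WGraph

variable {G : WGraph V} {v : V} {A : Cplus (G.bump v) → Cplus G}

theorem bumpSh_support_finite (ψ : Cplus (G.bump v)) (K : G.Ch) (S : Finset V) :
    (Function.support fun i : ℤ =>
      Upow (cExp G v i K S) (ψ (K.bumpSh v i, S))).Finite := by
  have hinj : Function.Injective
      (fun i : ℤ => ((K.bumpSh v i, S) : (G.bump v).Ch × Finset V)) := by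
    intro i j h
    have h1 := congrFun (congrArg Subtype.val (congrArg Prod.fst h)) v
    rw [Ch.bumpSh_val_v, Ch.bumpSh_val_v] at h1
    omega
  apply Set.Finite.subset
    (Set.Finite.preimage (Set.injOn_of_injective hinj) ψ.support.finite_toSet)
  intro i hi
  simp only [Function.mem_support] at hi
  simp only [Set.mem_preimage, Finset.mem_coe, Finsupp.mem_support_iff]
  intro h0
  exact hi (by rw [h0, Upow_zero])

theorem A_zero (hA : IsA G v A) : A 0 = 0 := by
  apply Finsupp.ext
  rintro ⟨K, S⟩
  rw [hA 0 K S, Finsupp.zero_apply]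
  have h : ∀ i : ℤ, Upow (cExp G v i K S) ((0 : Cplus (G.bump v)) (K.bumpSh v i, S)) = 0 :=
    fun i => by rw [Finsupp.zero_apply, Upow_zero]
  rw [finsum_congr h, finsum_zero]

theorem A_add (hA : IsA G v A) (ψ₁ ψ₂ : Cplus (G.bump v)) :
    A (ψ₁ + ψ₂) = A ψ₁ + A ψ₂ := by
  apply Finsupp.ext
  rintro ⟨K, S⟩
  rw [Finsupp.add_apply, hA _ K S, hA _ K S, hA _ K S,
    ← finsum_add_distrib (bumpSh_support_finite ψ₁ K S) (bumpSh_support_finite ψ₂ K S)]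
  apply finsum_congr
  intro i
  rw [Finsupp.add_apply, Upow_add']

theorem A_dual (hA : IsA G v A) (K' : (G.bump v).Ch) (S : Finset V) (m : ℕ)
    (N₁ N₂ : ℤ)
    (hb : ∀ i : ℤ, i ∉ Finset.Icc N₁ N₂ → (m : ℤ) < cExp G v i (K'.unbump i) S) :
    A (dual (K', S) m) = ∑ i ∈ Finset.Icc N₁ N₂,
      Finsupp.single ((K'.unbump i, S) : G.Ch × Finset V)
        (Upow (cExp G v i (K'.unbump i) S) (Um m)) := by
  apply Finsupp.ext
  rintro ⟨K₀, S₀⟩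
  rw [hA _ K₀ S₀, Finsupp.finset_sum_apply]
  by_cases hex : ∃ i : ℤ, K₀.bumpSh v i = K' ∧ S₀ = S
  · obtain ⟨i₀, hK, hS⟩ := hex
    have hK₀ : K₀ = K'.unbump i₀ := by
      rw [← hK, Ch.unbump_bumpSh, sub_self, Ch.evenSh_zero]
    have hL : ∑ᶠ i : ℤ, Upow (cExp G v i K₀ S₀) ((dual (K', S) m) (K₀.bumpSh v i, S₀))
        = Upow (cExp G v i₀ K₀ S₀) (Um m) := by
      rw [finsum_eq_single _ i₀ ?side]
      case side =>
        intro i hi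
        have hz : (dual (K', S) m) (K₀.bumpSh v i, S₀) = 0 := by
          unfold dual
          apply Finsupp.single_eq_of_ne
          intro hc
          apply hi
          injection hc with h1 h2
          have h2 := congrFun (congrArg Subtype.val h1) v
          have h3 := congrFun (congrArg Subtype.val hK) v
          rw [Ch.bumpSh_val_v] at h2 h3
          omega
        rw [hz, Upow_zero]
      · have heq : ((K₀.bumpSh v i₀, S₀) : (G.bump v).Ch × Finset V) = (K', S) := by
          rw [hK, hS]
        unfold dual
        rw [heq, Finsupp.single_eq_same]
    rw [hL]
    by_cases hmem : i₀ ∈ Finset.Icc N₁ N₂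
    · rw [Finset.sum_eq_single_of_mem i₀ hmem ?noth]
      case noth =>
        intro i hi hne
        apply Finsupp.single_eq_of_ne
        intro hc
        injection hc with h1 h2
        exact hne (Ch.unbump_inj K' (h1.symm.trans hK₀))
      have heq : ((K'.unbump i₀, S) : G.Ch × Finset V) = (K₀, S₀) := by
        rw [hK₀, hS]
      rw [heq, Finsupp.single_eq_same, hK₀, hS]
    · rw [Finset.sum_eq_zero ?zz]
      case zz =>
        intro i hi
        apply Finsupp.single_eq_of_ne
        intro hc
        injection hc with h1 h2
        have : i = i₀ := Ch.unbump_inj K' (h1.symm.trans hK₀)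
        exact hmem (this ▸ hi)
      have hgt := hb i₀ hmem
      rw [hK₀, hS, Upow_Um, if_neg (by omega)]
  · have hL : ∀ i : ℤ, Upow (cExp G v i K₀ S₀) ((dual (K', S) m) (K₀.bumpSh v i, S₀)) = 0 := by
      intro i
      have hz : (dual (K', S) m) (K₀.bumpSh v i, S₀) = 0 := by
        unfold dual
        apply Finsupp.single_eq_of_ne
        intro hc
        injection hc with h1 h2
        exact hex ⟨i, h1, h2⟩
      rw [hz, Upow_zero]
    rw [finsum_congr hL, finsum_zero, Finset.sum_eq_zero]
    intro i hi
    apply Finsupp.single_eq_of_ne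
    intro hc
    injection hc with h1 h2
    refine hex ⟨i, ?_, h2⟩
    rw [h1, Ch.bumpSh_unbump]

end Aux4


section Main

open WGraph

variable {G : WGraph V} {v : V} {A : Cplus (G.bump v) → Cplus G}

theorem T_big {i m : ℤ} (hm : 0 ≤ m) (h : m + 2 ≤ i ∨ i ≤ -m - 3) :
    m < i * (i + 1) / 2 := by
  rcases h with h | h
  · have := T_ge_self (i := i) (by omega)
    omega
  · have h1 := T_symm i
    have h2 := T_ge_self (i := -1 - i) (by omega)
    have h3 : (-1 - i) * (-1 - i + 1) / 2 = i * (i + 1) / 2 := h1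
    omega

theorem mem_sum (hA : IsA G v A) {ι : Type*} (s : Finset ι) (h : ι → Cplus G)
    (hh : ∀ i ∈ s, ∃ ψ, A ψ = h i) : ∃ ψ, A ψ = ∑ i ∈ s, h i := by
  classical
  induction s using Finset.cons_induction with
  | empty => exact ⟨0, by rw [A_zero hA, Finset.sum_empty]⟩
  | cons a s ha ih =>
    obtain ⟨ψ₁, h1⟩ := hh a (Finset.mem_cons_self a s)
    obtain ⟨ψ₂, h2⟩ := ih (fun i hi => hh i (Finset.mem_cons.2 (Or.inr hi)))
    exact ⟨ψ₁ + ψ₂, by rw [A_add hA, h1, h2, Finset.sum_cons]⟩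

theorem mem_cancel (hA : IsA G v A) {x y : Cplus G}
    (h : ∃ ψ, A ψ = x + y) (hy : ∃ ψ, A ψ = y) : ∃ ψ, A ψ = x := by
  obtain ⟨ψ₁, h1⟩ := h
  obtain ⟨ψ₂, h2⟩ := hy
  refine ⟨ψ₁ + ψ₂, ?_⟩
  rw [A_add hA, h1, h2, add_assoc, cplus_add_self, add_zero]

theorem mem_single_pos (hA : IsA G v A) (p : G.Ch × Finset V) (m : ℕ) (e : ℤ)
    (he : 1 ≤ e) (hIH : ∀ m' : ℕ, m' < m → ∃ ψ, A ψ = dual p m') :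
    ∃ ψ, A ψ = Finsupp.single p (Upow e (Um m)) := by
  rw [Upow_Um]
  by_cases h : e ≤ (m : ℤ)
  · rw [if_pos h]
    exact hIH ((m : ℤ) - e).toNat (by omega)
  · rw [if_neg h, Finsupp.single_zero]
    exact ⟨0, A_zero hA⟩

theorem teles (hA : IsA G v A) (S : Finset V) (m₂ : ℕ)
    (hIH : ∀ K₁ : G.Ch, ∃ ψ, A ψ = dual (K₁, S) m₂ + dual (K₁.evenSh v 1, S) m₂) :
    ∀ (n : ℕ) (K₀ : G.Ch), ∃ ψ, A ψ = dual (K₀, S) m₂ + dual (K₀.evenSh v (n : ℤ), S) m₂ := by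
  intro n
  induction n with
  | zero =>
    intro K₀
    refine ⟨0, ?_⟩
    rw [A_zero hA, Nat.cast_zero, Ch.evenSh_zero]
    exact (cplus_add_self _).symm
  | succ n ih =>
    intro K₀
    obtain ⟨ψ₁, h1⟩ := ih K₀
    obtain ⟨ψ₂, h2⟩ := hIH (K₀.evenSh v (n : ℤ))
    refine ⟨ψ₁ + ψ₂, ?_⟩
    rw [A_add hA, h1, h2, Ch.evenSh_evenSh]
    have hc : ((n : ℤ) + 1) = ((n + 1 : ℕ) : ℤ) := by push_cast; ring
    rw [hc]
    have hmid := cplus_add_self (dual (K₀.evenSh v (n : ℤ), S) m₂)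
    have hab : dual (K₀, S) m₂ + dual (K₀.evenSh v (n : ℤ), S) m₂
        + (dual (K₀.evenSh v (n : ℤ), S) m₂ + dual (K₀.evenSh v ((n + 1 : ℕ) : ℤ), S) m₂)
        = dual (K₀, S) m₂
          + ((dual (K₀.evenSh v (n : ℤ), S) m₂ + dual (K₀.evenSh v (n : ℤ), S) m₂)
            + dual (K₀.evenSh v ((n + 1 : ℕ) : ℤ), S) m₂) := by abel
    rw [hab, hmid, zero_add]

theorem main_mem (hA : IsA G v A) (m : ℕ) :
    (∀ (K : G.Ch) (S : Finset V), v ∈ S → ∃ ψ, A ψ = dual (K, S) m) ∧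
    (∀ (K : G.Ch) (S : Finset V), v ∉ S →
      ∃ ψ, A ψ = dual (K, S) m + dual (K.evenSh v 1, S) m) := by
  induction m using Nat.strong_induction_on with
  | _ m IH =>
  constructor
  · -- case v ∈ S
    intro Ktop S hvS
    have hstep : ∀ K : G.Ch,
        ((bsup G v K.1 S < G.qrel K.1 (S.erase v)) →
          ∃ ψ, A ψ = dual (K.evenSh v (-1), S) m) →
        ((G.qrel K.1 (S.erase v) < bsup G v K.1 S) →
          ∃ ψ, A ψ = dual (K.evenSh v 1, S) m) →
        ∃ ψ, A ψ = dual (K, S) m := by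
      intro K hlt hgt
      set K' : (G.bump v).Ch := K.bumpSh v (-1) with hK'
      set aK : ℤ := G.qrel K.1 (S.erase v) with haK
      set bK : ℤ := bsup G v K.1 S with hbK
      -- identify the base quantities
      have hu0 : K'.unbump 0 = K.evenSh v (-1) := by
        rw [hK', Ch.unbump_bumpSh]
        norm_num
      have fa : G.qrel (K'.unbump 0).1 (S.erase v) = aK := by
        rw [hu0, haK]
        exact qrel_congr (fun u hu => Ch.evenSh_val_ne K v (-1) (Finset.mem_erase.1 hu).1)
      have fb : bsup G v (K'.unbump 0).1 S = bK + 1 := by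
        rw [hu0]
        show bsup G v (Function.update K.1 v (K.1 v + 2 * (-1))) S = bK + 1
        rw [bsup_update, hbK]
        ring
      have hcexp : ∀ i : ℤ, cExp G v i (K'.unbump i) S = gfun aK (bK + 1) i := by
        intro i
        rw [cExp_unbump_mem hvS K' i, fa, fb]
      have hb : ∀ i : ℤ, i ∉ Finset.Icc (-(m : ℤ) - 2) ((m : ℤ) + 1) →
          (m : ℤ) < cExp G v i (K'.unbump i) S := by
        intro i hi
        rw [hcexp i]
        simp only [Finset.mem_Icc] at hi
        exact g_big (by omega) (by omega)
      have hAd := A_dual hA K' S m (-(m : ℤ) - 2) ((m : ℤ) + 1) hb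
      have hmem : (-1 : ℤ) ∈ Finset.Icc (-(m : ℤ) - 2) ((m : ℤ) + 1) := by
        simp only [Finset.mem_Icc]; omega
      rw [← Finset.add_sum_erase _ _ hmem] at hAd
      have hR1 : Finsupp.single ((K'.unbump (-1), S) : G.Ch × Finset V)
          (Upow (cExp G v (-1) (K'.unbump (-1)) S) (Um m)) = dual (K, S) m := by
        have hu1 : K'.unbump (-1) = K := by
          rw [hK', Ch.unbump_bumpSh]
          norm_num
        rw [hcexp (-1), g_neg_one, Upow_id, hu1]
        rfl
      rw [hR1] at hAd
      refine mem_cancel hA ⟨dual (K', S) m, hAd⟩ ?_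
      apply mem_sum hA
      intro i hi
      rw [Finset.mem_erase, Finset.mem_Icc] at hi
      by_cases hpos : 1 ≤ gfun aK (bK + 1) i
      · exact mem_single_pos hA _ m _ (by rw [hcexp i]; exact hpos)
          (fun m' hm' => (IH m' hm').1 (K'.unbump i) S hvS)
      · have hzero : gfun aK (bK + 1) i = 0 := by
          have := g_nonneg aK (bK + 1) i
          omega
        have hi2 : i = 0 ∨ i = -2 := by
          by_contra hcon
          push_neg at hcon
          have : (1 : ℤ) ≤ gfun aK (bK + 1) i := by
            apply g_pos
            omega
          omega
        rcases hi2 with rfl | rfl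
        · -- partner K.evenSh v (-1)
          have hblt : bK < aK := by
            have := g_zero aK (bK + 1)
            omega
          obtain ⟨ψ, hψ⟩ := hlt hblt
          refine ⟨ψ, ?_⟩
          rw [hψ]
          have hu : K'.unbump 0 = K.evenSh v (-1) := hu0
          rw [hcexp 0, hzero, Upow_id, hu]
          rfl
        · -- partner K.evenSh v 1
          have hbgt : aK < bK := by
            have := g_neg_two aK (bK + 1)
            omega
          obtain ⟨ψ, hψ⟩ := hgt hbgt
          refine ⟨ψ, ?_⟩
          rw [hψ]
          have hu : K'.unbump (-2) = K.evenSh v 1 := by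
            rw [hK', Ch.unbump_bumpSh]
            norm_num
          rw [hcexp (-2), hzero, Upow_id, hu]
          rfl
    -- inner induction on |a - b|
    have inner : ∀ (n : ℕ) (K : G.Ch),
        (G.qrel K.1 (S.erase v) - bsup G v K.1 S).natAbs ≤ n →
        ∃ ψ, A ψ = dual (K, S) m := by
      intro n
      induction n with
      | zero =>
        intro K hK
        exact hstep K (fun hlt => absurd hlt (by omega)) (fun hgt => absurd hgt (by omega))
      | succ n ih =>
        intro K hK
        refine hstep K (fun hlt => ih (K.evenSh v (-1)) ?_) (fun hgt => ih (K.evenSh v 1) ?_)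
        · have ha' : G.qrel (K.evenSh v (-1)).1 (S.erase v) = G.qrel K.1 (S.erase v) :=
            qrel_congr (fun u hu => Ch.evenSh_val_ne K v (-1) (Finset.mem_erase.1 hu).1)
          have hb' : bsup G v (K.evenSh v (-1)).1 S = bsup G v K.1 S + 1 := by
            show bsup G v (Function.update K.1 v (K.1 v + 2 * (-1))) S = _
            rw [bsup_update]
            ring
          rw [ha', hb']
          omega
        · have ha' : G.qrel (K.evenSh v 1).1 (S.erase v) = G.qrel K.1 (S.erase v) :=
            qrel_congr (fun u hu => Ch.evenSh_val_ne K v 1 (Finset.mem_erase.1 hu).1)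
          have hb' : bsup G v (K.evenSh v 1).1 S = bsup G v K.1 S - 1 := by
            show bsup G v (Function.update K.1 v (K.1 v + 2 * 1)) S = _
            rw [bsup_update]
          rw [ha', hb']
          omega
    exact inner _ Ktop le_rfl
  · -- case v ∉ S
    intro K S hvS
    set K' : (G.bump v).Ch := K.bumpSh v 0 with hK'
    have hcexp : ∀ i : ℤ, cExp G v i (K'.unbump i) S = i * (i + 1) / 2 :=
      fun i => cExp_unbump_notmem hvS K' i
    have hb : ∀ i : ℤ, i ∉ Finset.Icc (-(m : ℤ) - 2) ((m : ℤ) + 1) →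
        (m : ℤ) < cExp G v i (K'.unbump i) S := by
      intro i hi
      rw [hcexp i]
      simp only [Finset.mem_Icc] at hi
      exact T_big (by omega) (by omega)
    have hAd := A_dual hA K' S m (-(m : ℤ) - 2) ((m : ℤ) + 1) hb
    have hsplit : Finset.Icc (-(m : ℤ) - 2) ((m : ℤ) + 1)
        = Finset.Icc (-(m : ℤ) - 2) (-1) ∪ Finset.Icc 0 ((m : ℤ) + 1) := by
      ext x
      simp only [Finset.mem_Icc, Finset.mem_union]
      omega
    have hdisj : Disjoint (Finset.Icc (-(m : ℤ) - 2) (-1)) (Finset.Icc 0 ((m : ℤ) + 1)) := by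
      rw [Finset.disjoint_left]
      intro x hx hx'
      simp only [Finset.mem_Icc] at hx hx'
      omega
    rw [hsplit, Finset.sum_union hdisj] at hAd
    have hre : ∑ i ∈ Finset.Icc (-(m : ℤ) - 2) (-1),
          Finsupp.single ((K'.unbump i, S) : G.Ch × Finset V)
            (Upow (cExp G v i (K'.unbump i) S) (Um m))
        = ∑ i ∈ Finset.Icc 0 ((m : ℤ) + 1),
          Finsupp.single ((K'.unbump (-1 - i), S) : G.Ch × Finset V)
            (Upow (cExp G v (-1 - i) (K'.unbump (-1 - i)) S) (Um m)) := by
      refine Finset.sum_nbij' (fun j => -1 - j) (fun i => -1 - i) ?_ ?_ ?_ ?_ ?_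
      · intro a ha
        simp only [Finset.mem_Icc] at *
        omega
      · intro a ha
        simp only [Finset.mem_Icc] at *
        omega
      · intro a _
        show -1 - (-1 - a) = a
        omega
      · intro a _
        show -1 - (-1 - a) = a
        omega
      · intro a _
        have hx : -1 - (-1 - a) = a := by omega
        show _ = Finsupp.single ((K'.unbump (-1 - (-1 - a)), S) : G.Ch × Finset V)
          (Upow (cExp G v (-1 - (-1 - a)) (K'.unbump (-1 - (-1 - a))) S) (Um m))
        rw [hx]
    rw [hre, ← Finset.sum_add_distrib] at hAd
    have h0mem : (0 : ℤ) ∈ Finset.Icc (0 : ℤ) ((m : ℤ) + 1) := by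
      simp only [Finset.mem_Icc]
      omega
    rw [← Finset.add_sum_erase _ _ h0mem] at hAd
    have hu0 : K'.unbump 0 = K := by
      rw [hK', Ch.unbump_bumpSh]
      norm_num
    have hu1 : K'.unbump (-1 - 0) = K.evenSh v 1 := by
      rw [hK', Ch.unbump_bumpSh]
      norm_num
    have hfirst : Finsupp.single ((K'.unbump (-1 - 0), S) : G.Ch × Finset V)
          (Upow (cExp G v (-1 - 0) (K'.unbump (-1 - 0)) S) (Um m))
        + Finsupp.single ((K'.unbump 0, S) : G.Ch × Finset V)
          (Upow (cExp G v 0 (K'.unbump 0) S) (Um m))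
        = dual (K, S) m + dual (K.evenSh v 1, S) m := by
      have hT0 : cExp G v 0 (K'.unbump 0) S = 0 := by
        rw [hcexp 0]
        norm_num
      have hT0' : cExp G v (-1 - 0) (K'.unbump (-1 - 0)) S = 0 := by
        rw [hcexp (-1 - 0)]
        norm_num
      rw [hT0, hT0', Upow_id, hu0, hu1, add_comm]
      rfl
    rw [hfirst] at hAd
    refine mem_cancel hA ⟨dual (K', S) m, hAd⟩ ?_
    apply mem_sum hA
    intro i hi
    rw [Finset.mem_erase, Finset.mem_Icc] at hi
    have hi1 : 1 ≤ i := by omega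
    have hT1 : 1 ≤ i * (i + 1) / 2 := Tpos (Or.inr hi1)
    have hTsymm : cExp G v (-1 - i) (K'.unbump (-1 - i)) S = i * (i + 1) / 2 := by
      rw [hcexp (-1 - i)]
      exact T_symm i
    by_cases hle : i * (i + 1) / 2 ≤ (m : ℤ)
    · set m₂ : ℕ := ((m : ℤ) - i * (i + 1) / 2).toNat with hm₂
      have hm₂lt : m₂ < m := by omega
      have hRi : Finsupp.single ((K'.unbump i, S) : G.Ch × Finset V)
            (Upow (cExp G v i (K'.unbump i) S) (Um m))
          = dual (K.evenSh v (-i), S) m₂ := by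
        have hui : K'.unbump i = K.evenSh v (-i) := by
          rw [hK', Ch.unbump_bumpSh]
          congr 1
          ring
        rw [hcexp i, Upow_Um, if_pos hle, hui]
        rfl
      have hRj : Finsupp.single ((K'.unbump (-1 - i), S) : G.Ch × Finset V)
            (Upow (cExp G v (-1 - i) (K'.unbump (-1 - i)) S) (Um m))
          = dual (K.evenSh v (i + 1), S) m₂ := by
        have huj : K'.unbump (-1 - i) = K.evenSh v (i + 1) := by
          rw [hK', Ch.unbump_bumpSh]
          congr 1
          ring
        rw [hTsymm, Upow_Um, if_pos hle, huj]
        rfl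
      rw [hRi, hRj]
      have hIH2 : ∀ K₁ : G.Ch, ∃ ψ, A ψ = dual (K₁, S) m₂ + dual (K₁.evenSh v 1, S) m₂ :=
        fun K₁ => (IH m₂ hm₂lt).2 K₁ S hvS
      obtain ⟨ψ, hψ⟩ := teles hA S m₂ hIH2 (2 * i + 1).toNat (K.evenSh v (-i))
      refine ⟨ψ, ?_⟩
      rw [hψ, Ch.evenSh_evenSh]
      have hc : (-i + ((2 * i + 1).toNat : ℤ)) = i + 1 := by
        omega
      rw [hc, add_comm]
    · have hz1 : Upow (cExp G v i (K'.unbump i) S) (Um m) = 0 := by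
        rw [hcexp i, Upow_Um, if_neg (by omega)]
      have hz2 : Upow (cExp G v (-1 - i) (K'.unbump (-1 - i)) S) (Um m) = 0 := by
        rw [hTsymm, Upow_Um, if_neg (by omega)]
      rw [hz1, hz2, Finsupp.single_zero, Finsupp.single_zero, add_zero]
      exact ⟨0, A_zero hA⟩

end Main

/-- `𝒟 ⊆ im A`: every element of the submodule `𝒟 = 𝒟₁ ⊕ 𝒟₂` of `C⁺(G)`
lies in the image of the map `A : C⁺(G₊₁(v)) → C⁺(G)`. -/
theorem D_subset_range_A (G : WGraph V) (v : V)
    (A : Cplus (G.bump v) → Cplus G) (hA : IsA G v A) :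
    ∀ φ ∈ D1 G v ⊔ D2 G v, ∃ ψ, A ψ = φ := by
  intro φ hφ
  let MS : Submodule (ZMod 2) (Cplus G) :=
    { carrier := {χ | ∃ ψ, A ψ = χ}
      add_mem' := fun {x y} hx hy => by
        obtain ⟨ψ₁, h1⟩ := hx
        obtain ⟨ψ₂, h2⟩ := hy
        exact ⟨ψ₁ + ψ₂, by rw [A_add hA, h1, h2]⟩
      zero_mem' := ⟨0, A_zero hA⟩
      smul_mem' := fun c {x} hx => by
        have hc : ∀ c₀ : ZMod 2, c₀ = 0 ∨ c₀ = 1 := by decide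
        rcases hc c with rfl | rfl
        · rw [zero_smul]
          exact ⟨0, A_zero hA⟩
        · rw [one_smul]
          exact hx }
  have hle : D1 G v ⊔ D2 G v ≤ MS := by
    apply sup_le
    · rw [D1, Submodule.span_le]
      rintro χ ⟨K, S, m, hvS, rfl⟩
      exact (main_mem hA m).1 K S hvS
    · rw [D2, Submodule.span_le]
      rintro χ ⟨K, S, m, hvS, rfl⟩
      exact (main_mem hA m).2 K S hvS
  exact hle hφ

end
end

section
/- If v ∉ S, then A(((K,t+1),S)^∨) = ((K,t),S)^∨ + ((K,t+2),S)^∨ in C⁺(G); in particular A(((K,t+1),S)^∨) vanishes on all pairs ((K',t'),S') not of the form ((K,t+2i),S), and on ((K,t+2i),S) it takes the value 1 if i = 0 or 1 and 0 otherwise. -/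
/-!
Common setup: the lattice cohomology complex of a weighted graph
(Némethi; J. Greene, "A surgery triangle for lattice cohomology").

A finite graph `G` with integer weights on vertices and signs on (multi-)edges is
encoded by its symmetric incidence data `M : V → V → ℤ`: for `u ≠ w` the entry
`M u w` is the signed number of edges joining `u` and `w`, and `M u u = m(u)` is
the weight of `u`.  This is exactly the data of the intersection pairing `(·,·)`
on `L(G) = ℤ⟨E_u : u ∈ V⟩`, via `M u w = (E_u, E_w)`.
-/

noncomputable section

open Function

variable {V : Type*} [Fintype V] [DecidableEq V]

section AuxA

variable {V : Type*} [Fintype V] [DecidableEq V]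

theorem eVec_not_mem {T : Finset V} {v : V} (h : v ∉ T) : eVec T v = 0 := by
  simp [eVec, h]

theorem qrel_bumpSh (G : WGraph V) (v : V) (K : G.Ch) (i : ℤ) (S : Finset V)
    (hv : v ∉ S) :
    (G.bump v).qrel (K.bumpSh v i).1 S = G.qrel K.1 S := by
  unfold WGraph.qrel
  refine Finset.sup'_congr _ rfl ?_
  intro T hT
  rw [Finset.mem_powerset] at hT
  have hvT : v ∉ T := fun h => hv (hT h)
  unfold WGraph.qdiff
  rw [show (K.bumpSh v i).1 = Function.update K.1 v (K.1 v + (2 * i + 1)) from rfl,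
    WGraph.evalK_update, G.pair_bump, eVec_not_mem hvT]
  norm_num

theorem cExp_not_mem (G : WGraph V) (v : V) (i : ℤ) (K : G.Ch) (S : Finset V)
    (hv : v ∉ S) : cExp G v i K S = i * (i + 1) / 2 := by
  unfold cExp
  rw [qrel_bumpSh G v K i S hv, sub_self, zero_add]

theorem bumpSh_eq_iff (G : WGraph V) (v : V) (K K' : G.Ch) (i : ℤ) :
    K'.bumpSh v i = K.bumpSh v 0 ↔ K' = K.evenSh v (-i) := by
  constructor
  · intro h
    have h1 := congrArg Subtype.val h
    apply Subtype.ext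
    funext u
    by_cases hu : u = v
    · have h2 := congrFun h1 v
      subst hu
      simp only [WGraph.Ch.bumpSh, WGraph.Ch.evenSh, Function.update_self] at h2 ⊢
      omega
    · have h2 := congrFun h1 u
      simp only [WGraph.Ch.bumpSh, WGraph.Ch.evenSh, Function.update_of_ne hu] at h2 ⊢
      exact h2
  · intro h
    subst h
    apply Subtype.ext
    funext u
    by_cases hu : u = v
    · subst hu
      simp only [WGraph.Ch.bumpSh, WGraph.Ch.evenSh, Function.update_self]
      ring
    · simp only [WGraph.Ch.bumpSh, WGraph.Ch.evenSh, Function.update_of_ne hu]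

theorem evenSh_zero (G : WGraph V) (K : G.Ch) (v : V) : K.evenSh v 0 = K := by
  apply Subtype.ext
  funext u
  by_cases hu : u = v
  · subst hu
    simp [WGraph.Ch.evenSh]
  · simp [WGraph.Ch.evenSh, Function.update_of_ne hu]

theorem evenSh_inj (G : WGraph V) (K : G.Ch) (v : V) {a b : ℤ}
    (h : K.evenSh v a = K.evenSh v b) : a = b := by
  have h2 := congrFun (congrArg Subtype.val h) v
  simp only [WGraph.Ch.evenSh, Function.update_self] at h2
  omega

theorem Upow_Um_zero : Upow 0 (Um 0) = Um 0 := by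
  refine Finsupp.ext fun d => ?_
  simp only [Upow, Um]
  rw [Finsupp.comapDomain_apply, Finsupp.embDomain_single]
  simp only [Finsupp.single_apply, Function.Embedding.coeFn_mk]
  have : ((0 : ℕ) : ℤ) = (d : ℤ) + 0 ↔ 0 = d := by omega
  split_ifs with h1 h2 h2 <;> first | rfl | omega

theorem Upow_Um_pos {e : ℤ} (he : 0 < e) : Upow e (Um 0) = 0 := by
  refine Finsupp.ext fun d => ?_
  simp only [Upow, Um]
  rw [Finsupp.comapDomain_apply, Finsupp.embDomain_single]
  simp only [Finsupp.single_apply, Function.Embedding.coeFn_mk, Finsupp.coe_zero,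
    Pi.zero_apply]
  rw [if_neg (by omega)]
  rfl

end AuxA

/-- If `v ∉ S`, then `A(((K,t+1),S)^∨) = ((K,t),S)^∨ + ((K,t+2),S)^∨` in
`C⁺(G)`; in particular `A(((K,t+1),S)^∨)` vanishes on all pairs `((K',t'),S')` not of the
form `((K,t+2i),S)`, and on `((K,t+2i),S)` it takes the value `1` if `i = 0` or `1`, and `0`
otherwise. -/
theorem A_dual_of_not_mem (G : WGraph V) (v : V)
    (A : Cplus (G.bump v) → Cplus G) (hA : IsA G v A)
    (K : G.Ch) (S : Finset V) (hv : v ∉ S) :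
    A (dual (K.bumpSh v 0, S) 0) = dual (K, S) 0 + dual (K.evenSh v 1, S) 0 := by
  classical
  refine Finsupp.ext fun p => ?_
  obtain ⟨K', S'⟩ := p
  rw [hA, Finsupp.add_apply]
  unfold dual
  by_cases hex : ∃ i₀ : ℤ, S' = S ∧ K' = K.evenSh v (-i₀)
  · obtain ⟨i₀, rfl, rfl⟩ := hex
    have c1 : ((K, S') = (K.evenSh v (-i₀), S')) ↔ i₀ = 0 := by
      rw [Prod.mk.injEq]
      constructor
      · rintro ⟨hK, -⟩
        have h3 : K.evenSh v 0 = K.evenSh v (-i₀) := by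
          rw [evenSh_zero]; exact hK
        have := evenSh_inj G K v h3
        omega
      · rintro rfl
        rw [neg_zero, evenSh_zero]
        exact ⟨rfl, rfl⟩
    have c2 : ((K.evenSh v 1, S') = (K.evenSh v (-i₀), S')) ↔ i₀ = -1 := by
      rw [Prod.mk.injEq]
      constructor
      · rintro ⟨hK, -⟩
        have := evenSh_inj G K v hK
        omega
      · rintro rfl
        norm_num
    have hb : (K.evenSh v (-i₀)).bumpSh v i₀ = K.bumpSh v 0 :=
      (bumpSh_eq_iff G v K _ i₀).2 rfl
    rw [finsum_eq_single _ i₀ (fun i hi => ?_)]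
    · rw [Finsupp.single_apply, if_pos (by rw [hb]),
        cExp_not_mem G v i₀ _ _ hv, Finsupp.single_apply, Finsupp.single_apply]
      rcases eq_or_ne i₀ 0 with h0 | h0
      · rw [if_pos (c1.mpr h0), if_neg (fun h => by have := c2.mp h; omega),
          add_zero, h0]
        norm_num
        exact Upow_Um_zero
      rcases eq_or_ne i₀ (-1) with h1 | h1
      · rw [if_neg (fun h => by have := c1.mp h; omega), if_pos (c2.mpr h1),
          zero_add, h1]
        norm_num
        exact Upow_Um_zero
      · have hpos : 0 < i₀ * (i₀ + 1) / 2 := by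
          have h2 : 2 ≤ i₀ * (i₀ + 1) := by
            rcases (by omega : 1 ≤ i₀ ∨ i₀ ≤ -2) with h | h
            · nlinarith
            · nlinarith
          omega
        rw [Upow_Um_pos hpos, if_neg (fun h => h0 (c1.mp h)),
          if_neg (fun h => h1 (c2.mp h)), add_zero]
    · rw [Finsupp.single_apply, if_neg, Upow_zero]
      intro h
      rw [Prod.mk.injEq] at h
      have hK := (bumpSh_eq_iff G v K _ i).1 h.1.symm
      have := evenSh_inj G K v hK
      omega
  · have n1 : ¬((K, S) = (K', S')) := by
      intro h
      rw [Prod.mk.injEq] at h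
      exact hex ⟨0, h.2.symm, by rw [← h.1, neg_zero, evenSh_zero]⟩
    have n2 : ¬((K.evenSh v 1, S) = (K', S')) := by
      intro h
      rw [Prod.mk.injEq] at h
      exact hex ⟨-1, h.2.symm, by rw [← h.1]; norm_num⟩
    rw [finsum_eq_zero_of_forall_eq_zero (fun i => ?_), Finsupp.single_apply,
      Finsupp.single_apply, if_neg n1, if_neg n2, add_zero]
    rw [Finsupp.single_apply, if_neg, Upow_zero]
    intro h
    rw [Prod.mk.injEq] at h
    exact hex ⟨i, h.2.symm, (bumpSh_eq_iff G v K K' i).1 h.1.symm⟩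

end
end
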